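/- arXiv:1808.05566 — 7 statements merged into one kernel-verified Lean document; each statement's English description precedes it below -/
import Mathlib

section
/- The function g(a) := ∫₀¹ (a^{1 - 1/u} / u) du is strictly decreasing in a for a > 1, and there exists a unique α > 1 with g(α) = 1. -/
open Real Set MeasureTheory intervalIntegral

noncomputable def gFun (a : ℝ) : ℝ := ∫ u in (0:ℝ)..1, Real.exp ((1 - 1/u) * Real.log a) / u

noncomputable def fFun (a u : ℝ) : ℝ := Real.exp ((1 - 1/u) * Real.log a) / u

lemma fFun_nonneg (a u : ℝ) (hu : 0 ≤ u) : 0 ≤ fFun a u :=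
  div_nonneg (Real.exp_pos _).le hu

lemma fFun_bound {a : ℝ} (ha : 1 < a) {u : ℝ} (hu : u ∈ Set.Ioc (0:ℝ) 1) :
    fFun a u ≤ 1 + 1 / Real.log a := by
  have hc : 0 < Real.log a := Real.log_pos ha
  set c := Real.log a
  obtain ⟨hu0, hu1⟩ := hu
  have ht : 0 ≤ 1/u - 1 := by
    rw [sub_nonneg, le_div_iff₀ hu0]; linarith
  set t := 1/u - 1 with htdef
  have hinv : 1/u = t + 1 := by ring
  have hf : fFun a u = Real.exp (-(t*c)) * (t+1) := by
    rw [fFun, div_eq_mul_one_div, hinv]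
    ring_nf
    rfl
  rw [hf]
  clear_value t c
  have hexp : Real.exp (-(t*c)) ≤ 1/(1 + t*c) := by
    rw [Real.exp_neg]
    rw [one_div, inv_le_inv₀ (Real.exp_pos _) (by nlinarith)]
    exact Real.add_one_le_exp _ |>.trans_eq' (by ring)
  calc Real.exp (-(t*c)) * (t+1) ≤ (1/(1+t*c)) * (t+1) := by
        apply mul_le_mul_of_nonneg_right hexp (by linarith)
    _ ≤ 1 + 1/c := by
        rw [div_mul_eq_mul_div, div_le_iff₀ (by nlinarith)]
        have h1c : 0 < 1/c := by positivity
        have : 1/c * c = 1 := by field_simp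
        have key : (1+1/c)*(1+t*c) = 1 + t*c + 1/c + t := by field_simp; ring
        rw [key]
        have h2 : 0 ≤ t * c := mul_nonneg ht hc.le
        linarith

lemma fFun_meas (a : ℝ) : Measurable (fFun a) := by
  unfold fFun
  simp only [one_div]
  exact (((measurable_const.sub measurable_inv).mul_const _).exp).div measurable_id

lemma fFun_intble {a : ℝ} (ha : 1 < a) : IntervalIntegrable (fFun a) volume 0 1 := by
  rw [intervalIntegrable_iff_integrableOn_Ioc_of_le zero_le_one]
  apply MeasureTheory.Integrable.mono' (g := fun _ => 1 + 1/Real.log a)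
      (integrableOn_const measure_Ioc_lt_top.ne)
      ((fFun_meas a).aestronglyMeasurable.restrict)
  · refine (ae_restrict_iff' measurableSet_Ioc).2 (Filter.Eventually.of_forall ?_)
    intro u hu
    rw [Real.norm_eq_abs, abs_of_nonneg (fFun_nonneg a u hu.1.le)]
    exact fFun_bound ha hu

lemma gFun_strictAnti : StrictAntiOn gFun (Set.Ioi 1) := by
  intro a ha b hb hab
  simp only [Set.mem_Ioi] at ha hb
  have hint : ∀ x ∈ Set.Ioo (0:ℝ) 1, 0 < fFun a x - fFun b x := by
    intro u hu
    obtain ⟨hu0, hu1⟩ := hu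
    have hneg : 1 - 1/u < 0 := by
      rw [sub_neg, lt_div_iff₀ hu0]; linarith
    have h1 : (1 - 1/u) * Real.log b < (1 - 1/u) * Real.log a :=
      mul_lt_mul_of_neg_left (Real.log_lt_log (by linarith) hab) hneg
    have h2 : Real.exp ((1 - 1/u) * Real.log b) < Real.exp ((1 - 1/u) * Real.log a) :=
      Real.exp_lt_exp.2 h1
    have : fFun b u < fFun a u := by
      unfold fFun; gcongr
    linarith
  have hpos := intervalIntegral.intervalIntegral_pos_of_pos_on
      (f := fun u => fFun a u - fFun b u)
      (((fFun_intble ha).sub (fFun_intble (ha.trans hab)))) hint zero_lt_one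
  have heq : gFun a - gFun b = ∫ u in (0:ℝ)..1, (fFun a u - fFun b u) := by
    rw [intervalIntegral.integral_sub (fFun_intble ha) (fFun_intble (ha.trans hab))]
    rfl
  linarith

lemma gFun_contAt {x₀ : ℝ} (hx : 1 < x₀) : ContinuousAt gFun x₀ := by
  set lo : ℝ := (1 + x₀)/2 with hlo
  have hlo1 : 1 < lo := by rw [hlo]; linarith
  have hlox : lo < x₀ := by rw [hlo]; linarith
  have hev : ∀ᶠ x in nhds x₀, x ∈ Set.Ioi lo := Ioi_mem_nhds hlox
  apply intervalIntegral.continuousAt_of_dominated_interval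
      (bound := fun _ => 1 + 1/Real.log lo)
  · exact Filter.Eventually.of_forall fun x => (fFun_meas x).aestronglyMeasurable.restrict
  · filter_upwards [hev] with x hx'
    refine Filter.Eventually.of_forall fun t ht => ?_
    rw [Set.uIoc_of_le zero_le_one] at ht
    have hx1 : 1 < x := hlo1.trans hx'
    show ‖fFun x t‖ ≤ _
    rw [Real.norm_eq_abs, abs_of_nonneg (fFun_nonneg x t ht.1.le)]
    refine (fFun_bound hx1 ht).trans ?_
    have h1 : Real.log lo ≤ Real.log x := Real.log_le_log (by linarith) hx'.le
    have h2 : 0 < Real.log lo := Real.log_pos hlo1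
    gcongr
  · exact intervalIntegrable_const
  · refine Filter.Eventually.of_forall fun t ht => ?_
    rw [Set.uIoc_of_le zero_le_one] at ht
    have ht0 : t ≠ 0 := ne_of_gt ht.1
    have hx0 : x₀ ≠ 0 := by positivity
    exact ((((Real.continuousAt_log hx0).const_mul _).rexp).div_const t)

lemma gFun_lower : 1 < gFun (Real.exp (1/16)) := by
  have ha : (1:ℝ) < Real.exp (1/16) := by
    rw [show (1:ℝ) = Real.exp 0 by simp]
    exact Real.exp_lt_exp.2 (by norm_num)
  set ε : ℝ := Real.exp (-2) with hε
  have hε0 : 0 < ε := Real.exp_pos _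
  have hε1 : ε < 1 := by
    rw [hε, show (1:ℝ) = Real.exp 0 by simp]
    exact Real.exp_lt_exp.2 (by norm_num)
  have hlog : Real.log (Real.exp (1/16)) = 1/16 := Real.log_exp _
  have hi1 : IntervalIntegrable (fFun (Real.exp (1/16))) volume 0 ε :=
    (fFun_intble ha).mono_set (by
      rw [Set.uIcc_of_le hε0.le, Set.uIcc_of_le zero_le_one]
      exact Set.Icc_subset_Icc le_rfl hε1.le)
  have hi2 : IntervalIntegrable (fFun (Real.exp (1/16))) volume ε 1 :=
    (fFun_intble ha).mono_set (by
      rw [Set.uIcc_of_le hε1.le, Set.uIcc_of_le zero_le_one]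
      exact Set.Icc_subset_Icc hε0.le le_rfl)
  have hsplit : gFun (Real.exp (1/16)) =
      (∫ u in (0:ℝ)..ε, fFun (Real.exp (1/16)) u) + ∫ u in ε..1, fFun (Real.exp (1/16)) u :=
    (intervalIntegral.integral_add_adjacent_intervals hi1 hi2).symm
  set K : ℝ := Real.exp ((1 - 1/ε) * (1/16)) with hK
  have h1 : 0 ≤ ∫ u in (0:ℝ)..ε, fFun (Real.exp (1/16)) u :=
    intervalIntegral.integral_nonneg hε0.le (fun u hu => fFun_nonneg _ _ hu.1)
  have h2 : (∫ u in ε..1, K * (1/u)) ≤ ∫ u in ε..1, fFun (Real.exp (1/16)) u := by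
    apply intervalIntegral.integral_mono_on hε1.le _ hi2
    · intro u hu
      obtain ⟨huε, hu1⟩ := hu
      have hu0 : 0 < u := hε0.trans_le huε
      have hle : (1 - 1/ε) * (1/16) ≤ (1 - 1/u) * (1/16) := by
        have : 1/u ≤ 1/ε := by gcongr
        nlinarith
      calc K * (1/u) = K / u := by ring
        _ ≤ fFun (Real.exp (1/16)) u := by
            rw [fFun, hlog, hK]
            gcongr
    · apply ContinuousOn.intervalIntegrable
      rw [Set.uIcc_of_le hε1.le]
      exact continuousOn_const.mul ((continuousOn_const.div continuousOn_id) fun x hx =>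
        ne_of_gt (hε0.trans_le hx.1))
  have hcomp : (∫ u in ε..1, K * (1/u)) = K * 2 := by
    rw [intervalIntegral.integral_const_mul]
    rw [integral_one_div (by
      intro h
      rw [Set.uIcc_of_le hε1.le] at h
      exact absurd h.1 (by simp [hε0]))]
    rw [hε, show (1:ℝ)/Real.exp (-2) = Real.exp 2 by rw [Real.exp_neg]; simp]
    rw [Real.log_exp]
  have hK2 : 1 < K * 2 := by
    have he2 : Real.exp 2 < 7.39 := by
      have h1 := Real.exp_one_lt_d9
      have : Real.exp 2 = Real.exp 1 * Real.exp 1 := by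
        rw [← Real.exp_add]; norm_num
      nlinarith [Real.exp_pos 1]
    have hl2 := Real.log_two_gt_d9
    have : (1/2 : ℝ) < K := by
      rw [hK, show (1 - 1/ε) = 1 - Real.exp 2 by rw [hε, Real.exp_neg]; simp]
      rw [show (1/2:ℝ) = Real.exp (Real.log (1/2)) from (Real.exp_log (by norm_num)).symm]
      apply Real.exp_lt_exp.2
      rw [show Real.log (1/2 : ℝ) = -Real.log 2 by rw [one_div, Real.log_inv]]
      nlinarith
    linarith
  linarith

lemma gFun_upper : gFun (Real.exp 8) < 1 := by
  have ha : (1:ℝ) < Real.exp 8 := by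
    rw [show (1:ℝ) = Real.exp 0 by simp]
    exact Real.exp_lt_exp.2 (by norm_num)
  have hlog : Real.log (Real.exp 8) = 8 := Real.log_exp _
  have hi1 : IntervalIntegrable (fFun (Real.exp 8)) volume 0 (1/2) :=
    (fFun_intble ha).mono_set (by
      rw [Set.uIcc_of_le (by norm_num : (0:ℝ) ≤ 1/2), Set.uIcc_of_le zero_le_one]
      exact Set.Icc_subset_Icc le_rfl (by norm_num))
  have hi2 : IntervalIntegrable (fFun (Real.exp 8)) volume (1/2) 1 :=
    (fFun_intble ha).mono_set (by
      rw [Set.uIcc_of_le (by norm_num : (1/2:ℝ) ≤ 1), Set.uIcc_of_le zero_le_one]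
      exact Set.Icc_subset_Icc (by norm_num) le_rfl)
  have hsplit : gFun (Real.exp 8) =
      (∫ u in (0:ℝ)..(1/2), fFun (Real.exp 8) u) + ∫ u in (1/2:ℝ)..1, fFun (Real.exp 8) u :=
    (intervalIntegral.integral_add_adjacent_intervals hi1 hi2).symm
  -- piece 1
  have h1 : (∫ u in (0:ℝ)..(1/2), fFun (Real.exp 8) u) ≤ Real.exp (-8) := by
    have hmono : ∀ u ∈ Set.Icc (0:ℝ) (1/2), fFun (Real.exp 8) u ≤ 2 * Real.exp (-8) := by
      intro u hu
      obtain ⟨hu0, hu2⟩ := hu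
      rcases eq_or_lt_of_le hu0 with h | hu0
      · rw [fFun, ← h, div_zero]
        positivity
      · have ht : 1 ≤ 1/u - 1 := by
          rw [le_sub_iff_add_le, le_div_iff₀ hu0]; linarith
        set t := 1/u - 1 with htdef
        have hfe : fFun (Real.exp 8) u = Real.exp (-(t*8)) * (t+1) := by
          rw [fFun, hlog, div_eq_mul_one_div, show 1/u = t + 1 by rw [htdef]; ring]
          ring_nf
        rw [hfe]
        clear_value t
        have hsplit2 : Real.exp (-(t*8)) = Real.exp (-8) * Real.exp (-(8*(t-1))) := by
          rw [← Real.exp_add]; ring_nf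
        have hb : Real.exp (-(8*(t-1))) ≤ 1/(1+8*(t-1)) := by
          rw [Real.exp_neg, one_div, inv_le_inv₀ (Real.exp_pos _) (by nlinarith)]
          exact (Real.add_one_le_exp _).trans_eq' (by ring)
        have hpos : (0:ℝ) < 1 + 8*(t-1) := by nlinarith
        have key : (t+1) * (1/(1+8*(t-1))) ≤ 2 := by
          rw [mul_one_div, div_le_iff₀ hpos]; nlinarith
        calc Real.exp (-(t*8)) * (t+1)
            = Real.exp (-8) * (Real.exp (-(8*(t-1))) * (t+1)) := by rw [hsplit2]; ring
          _ ≤ Real.exp (-8) * ((1/(1+8*(t-1))) * (t+1)) := by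
              apply mul_le_mul_of_nonneg_left _ (Real.exp_pos _).le
              exact mul_le_mul_of_nonneg_right hb (by linarith)
          _ ≤ Real.exp (-8) * 2 := by
              apply mul_le_mul_of_nonneg_left _ (Real.exp_pos _).le
              linarith [key]
          _ = 2 * Real.exp (-8) := by ring
    calc (∫ u in (0:ℝ)..(1/2), fFun (Real.exp 8) u)
        ≤ ∫ _ in (0:ℝ)..(1/2), 2 * Real.exp (-8) :=
          intervalIntegral.integral_mono_on (by norm_num) hi1 intervalIntegrable_const hmono
      _ = Real.exp (-8) := by
          rw [intervalIntegral.integral_const]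
          norm_num
          ring
  -- piece 2
  have h2 : (∫ u in (1/2:ℝ)..1, fFun (Real.exp 8) u) ≤ 1/4 := by
    have hmono : ∀ u ∈ Set.Icc (1/2:ℝ) 1, fFun (Real.exp 8) u ≤ 2 * Real.exp (8*u - 8) := by
      intro u hu
      obtain ⟨hu2, hu1⟩ := hu
      have hu0 : 0 < u := by linarith
      have hexp : Real.exp ((1 - 1/u) * 8) ≤ Real.exp (8*u - 8) := by
        apply Real.exp_le_exp.2
        have h : 1 - 1/u ≤ u - 1 := by
          rw [sub_le_sub_iff, ← sub_nonneg]
          have : u + (1/u) - (1 + 1) = (1-u)^2 / u := by field_simp; ring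
          rw [show u + 1/u - (1+1) = u + 1/u - (1:ℝ) - 1 by ring] at this
          nlinarith [sq_nonneg (1-u), div_nonneg (sq_nonneg (1-u)) hu0.le]
        nlinarith
      calc fFun (Real.exp 8) u = Real.exp ((1 - 1/u) * 8) * (1/u) := by
            rw [fFun, hlog, div_eq_mul_one_div]
        _ ≤ Real.exp (8*u - 8) * 2 := by
            apply mul_le_mul hexp _ (by positivity) (Real.exp_pos _).le
            rw [div_le_iff₀ hu0]; linarith
        _ = 2 * Real.exp (8*u - 8) := by ring
    have hderiv : ∀ u ∈ Set.uIcc (1/2:ℝ) 1,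
        HasDerivAt (fun v => Real.exp (8*v - 8)/4) (2 * Real.exp (8*u - 8)) u := by
      intro u _
      have h := (((hasDerivAt_id u).const_mul 8).sub_const 8).exp.div_const 4
      refine h.congr_deriv ?_
      simp only [id]
      ring
    have hcint : IntervalIntegrable (fun u => 2 * Real.exp (8*u - 8)) volume (1/2) 1 :=
      (Continuous.intervalIntegrable (by continuity) _ _)
    have hval : (∫ u in (1/2:ℝ)..1, 2 * Real.exp (8*u - 8)) =
        Real.exp (8*1 - 8)/4 - Real.exp (8*(1/2) - 8)/4 :=
      intervalIntegral.integral_eq_sub_of_hasDerivAt hderiv hcint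
    have : (∫ u in (1/2:ℝ)..1, 2 * Real.exp (8*u - 8)) ≤ 1/4 := by
      rw [hval]
      norm_num
      positivity
    calc (∫ u in (1/2:ℝ)..1, fFun (Real.exp 8) u)
        ≤ ∫ u in (1/2:ℝ)..1, 2 * Real.exp (8*u - 8) :=
          intervalIntegral.integral_mono_on (by norm_num) hi2 hcint hmono
      _ ≤ 1/4 := this
  have he8 : Real.exp (-8) ≤ 1/9 := by
    rw [Real.exp_neg, inv_le_comm₀ (Real.exp_pos _) (by norm_num)]
    calc (1/9 : ℝ)⁻¹ = 9 := by norm_num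
      _ ≤ Real.exp 8 := by nlinarith [Real.add_one_le_exp (8:ℝ)]
  linarith

theorem strictAnti_and_unique_alpha :
    StrictAntiOn (fun a : ℝ => ∫ u in (0:ℝ)..1, Real.exp ((1 - 1/u) * Real.log a) / u)
        (Set.Ioi 1) ∧
      ∃! α : ℝ, 1 < α ∧
        (∫ u in (0:ℝ)..1, Real.exp ((1 - 1/u) * Real.log α) / u) = 1 := by
  constructor
  · exact gFun_strictAnti
  · have ha1 : (1:ℝ) < Real.exp (1/16) := by
      rw [show (1:ℝ) = Real.exp 0 by simp]
      exact Real.exp_lt_exp.2 (by norm_num)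
    have h12 : Real.exp (1/16) ≤ Real.exp 8 := Real.exp_le_exp.2 (by norm_num)
    have hcont : ContinuousOn gFun (Set.Icc (Real.exp (1/16)) (Real.exp 8)) :=
      fun x hx => (gFun_contAt (ha1.trans_le hx.1)).continuousWithinAt
    have hmem : (1:ℝ) ∈ Set.Icc (gFun (Real.exp 8)) (gFun (Real.exp (1/16))) :=
      ⟨gFun_upper.le, gFun_lower.le⟩
    obtain ⟨α, hαI, hαv⟩ := intermediate_value_Icc' h12 hcont hmem
    have hα1 : 1 < α := ha1.trans_le hαI.1
    refine ⟨α, ⟨hα1, hαv⟩, ?_⟩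
    rintro β ⟨hβ1, hβv⟩
    have : gFun β = gFun α := by rw [show gFun β = _ from hβv, hαv]
    exact gFun_strictAnti.injOn hβ1 hα1 this
end

section
/- Define h(a,b) = ∫₀^b (a/z)·e^{-a/z} dz for a, b > 0. If α > 1 and β = α/ln α satisfy h(α, β) = 1, then ∂h/∂a(α, β) = 0. -/
open Real Filter MeasureTheory intervalIntegral Set Metric
open scoped Topology Interval

/-- Key limit: `exp (-c/z) / z ^ n → 0` as `z → 0⁺`. -/
lemma tendsto_exp_neg_div_pow (c : ℝ) (hc : 0 < c) (n : ℕ) :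
    Tendsto (fun z : ℝ => Real.exp (-c / z) / z ^ n) (𝓝[>] 0) (𝓝 0) := by
  have h1 : Tendsto (fun z : ℝ => c / z) (𝓝[>] 0) atTop := by
    have := tendsto_inv_nhdsGT_zero.const_mul_atTop hc
    simpa [div_eq_mul_inv] using this
  have h2 : Tendsto (fun x : ℝ => x ^ n * Real.exp (-x)) atTop (𝓝 0) :=
    tendsto_pow_mul_exp_neg_atTop_nhds_zero n
  have h3 : Tendsto (fun z : ℝ => (c / z) ^ n * Real.exp (-(c / z)) / c ^ n) (𝓝[>] 0)
      (𝓝 0) := by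
    have := (h2.comp h1).div_const (c ^ n)
    simpa using this
  apply h3.congr'
  filter_upwards [self_mem_nhdsWithin] with z hz
  have hz0 : z ≠ 0 := ne_of_gt hz
  have hc0 : c ≠ 0 := ne_of_gt hc
  rw [div_pow, neg_div]
  field_simp

/-- Continuity on `[0, b]` (for `n ≥ 1`, the junk value at `0` matches the limit). -/
lemma contOn_exp_neg_div_pow (c : ℝ) (hc : 0 < c) (n : ℕ) (hn : n ≠ 0) (b : ℝ) :
    ContinuousOn (fun z : ℝ => Real.exp (-c / z) / z ^ n) (Set.Icc 0 b) := by
  intro z hz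
  rcases eq_or_lt_of_le hz.1 with h0 | h0
  · -- z = 0
    have hval : Real.exp (-c / (0:ℝ)) / (0:ℝ) ^ n = 0 := by
      simp [zero_pow hn]
    rw [ContinuousWithinAt, ← h0, hval]
    have hle : 𝓝[Set.Icc (0:ℝ) b] 0 ≤ 𝓝[Set.Ici (0:ℝ)] 0 :=
      nhdsWithin_mono _ Set.Icc_subset_Ici_self
    apply Tendsto.mono_left _ hle
    have : Set.Ici (0:ℝ) = {0} ∪ Set.Ioi 0 := by
      ext x; simp [le_iff_lt_or_eq, or_comm, eq_comm]
    rw [this, nhdsWithin_union]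
    rw [tendsto_sup]
    constructor
    · rw [nhdsWithin_singleton]
      have := tendsto_pure_nhds (fun z : ℝ => Real.exp (-c / z) / z ^ n) 0
      rwa [hval] at this
    · exact tendsto_exp_neg_div_pow c hc n
  · -- z > 0
    apply ContinuousAt.continuousWithinAt
    have hz0 : z ≠ 0 := ne_of_gt h0
    have hA : ContinuousAt (fun z : ℝ => c / z) z := continuousAt_const.div continuousAt_id hz0
    have hB : ContinuousAt (fun z : ℝ => z ^ n) z := continuousAt_pow z n
    exact (hA.neg.rexp.div hB (pow_ne_zero n hz0)).congr
      (by filter_upwards with x; simp [neg_div])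

theorem deriv_h_at_alpha_beta_eq_zero (α β : ℝ) (hα : 1 < α)
    (hβ : β = α / Real.log α)
    (h1 : (∫ z in (0:ℝ)..β, (α / z) * Real.exp (-α / z)) = 1) :
    HasDerivAt (fun a : ℝ => ∫ z in (0:ℝ)..β, (a / z) * Real.exp (-a / z)) 0 α := by
  have hα0 : (0:ℝ) < α := lt_trans one_pos hα
  have hlog : 0 < Real.log α := Real.log_pos hα
  have hβ0 : 0 < β := hβ ▸ div_pos hα0 hlog
  set ε : ℝ := (α - 1) / 2 with hε_def
  have hε : 0 < ε := by simp only [hε_def]; linarith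
  set c : ℝ := (α + 1) / 2 with hc_def
  have hc : 0 < c := by simp only [hc_def]; linarith
  set A : ℝ := α + ε with hA_def
  set F' : ℝ → ℝ → ℝ := fun a z => Real.exp (-a / z) / z - a * (Real.exp (-a / z) / z ^ 2)
    with hF'_def
  set bound : ℝ → ℝ := fun z => Real.exp (-c / z) / z + A * (Real.exp (-c / z) / z ^ 2)
    with hbound_def
  have huIoc : Ι (0:ℝ) β = Set.Ioc 0 β := Set.uIoc_of_le hβ0.le
  have huIcc : Set.uIcc (0:ℝ) β = Set.Icc 0 β := Set.uIcc_of_le hβ0.le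
  -- measurability of F x for all x
  have hF_meas : ∀ᶠ x in 𝓝 α, AEStronglyMeasurable (fun z => (x / z) * Real.exp (-x / z))
      ((volume : Measure ℝ).restrict (Ι 0 β)) := by
    apply Filter.Eventually.of_forall
    intro a
    rw [huIoc]
    have h1d : ContinuousOn (fun z : ℝ => a / z) (Set.Ioc 0 β) :=
      continuousOn_const.div continuousOn_id (fun z hz => ne_of_gt hz.1)
    have h2d : ContinuousOn (fun z : ℝ => -a / z) (Set.Ioc 0 β) :=
      continuousOn_const.div continuousOn_id (fun z hz => ne_of_gt hz.1)
    exact (h1d.mul (Real.continuous_exp.comp_continuousOn h2d)).aestronglyMeasurable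
      measurableSet_Ioc
  -- integrability of F α
  have hF_int : IntervalIntegrable (fun z => (α / z) * Real.exp (-α / z)) volume 0 β := by
    apply ContinuousOn.intervalIntegrable
    rw [huIcc]
    have : ContinuousOn (fun z : ℝ => α * (Real.exp (-α / z) / z ^ 1)) (Set.Icc 0 β) :=
      continuousOn_const.mul (contOn_exp_neg_div_pow α hα0 1 one_ne_zero β)
    apply this.congr
    intro z _
    simp only [pow_one]; ring
  -- measurability of F' α
  have hF'_meas : AEStronglyMeasurable (F' α) ((volume : Measure ℝ).restrict (Ι 0 β)) := by
    rw [huIoc]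
    have hne : ∀ z ∈ Set.Ioc (0:ℝ) β, z ≠ 0 := fun z hz => ne_of_gt hz.1
    have hexp : ContinuousOn (fun z : ℝ => Real.exp (-α / z)) (Set.Ioc 0 β) :=
      Real.continuous_exp.comp_continuousOn
        (continuousOn_const.div continuousOn_id hne)
    have : ContinuousOn (F' α) (Set.Ioc 0 β) := by
      apply ContinuousOn.sub
      · exact hexp.div continuousOn_id hne
      · exact continuousOn_const.mul (hexp.div (continuousOn_pow 2)
          (fun z hz => pow_ne_zero 2 (hne z hz)))
    exact this.aestronglyMeasurable measurableSet_Ioc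
  -- the bound
  have h_bound : ∀ᵐ t ∂(volume : Measure ℝ), t ∈ Ι 0 β →
      ∀ x ∈ Metric.ball α ε, ‖F' x t‖ ≤ bound t := by
    apply Filter.Eventually.of_forall
    intro z hz a ha
    rw [huIoc] at hz
    have hz0 : 0 < z := hz.1
    rw [Metric.mem_ball, Real.dist_eq, abs_lt] at ha
    have hca : c ≤ a := by simp only [hc_def]; simp only [hε_def] at ha; linarith
    have haA : a ≤ A := by simp only [hA_def]; linarith
    have ha0 : 0 < a := lt_of_lt_of_le hc hca
    have hee : Real.exp (-a / z) ≤ Real.exp (-c / z) := by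
      apply Real.exp_le_exp.mpr
      have : -a ≤ -c := by linarith
      exact (div_le_div_iff_of_pos_right hz0).mpr this
    calc ‖F' a z‖ ≤ ‖Real.exp (-a / z) / z‖ + ‖a * (Real.exp (-a / z) / z ^ 2)‖ :=
          norm_sub_le _ _
      _ = Real.exp (-a / z) / z + a * (Real.exp (-a / z) / z ^ 2) := by
          rw [Real.norm_eq_abs, Real.norm_eq_abs, abs_of_nonneg (by positivity),
            abs_of_nonneg (by positivity)]
      _ ≤ bound z := by
          simp only [hbound_def]
          gcongr
  -- integrability of the bound
  have bound_int : IntervalIntegrable bound volume 0 β := by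
    apply ContinuousOn.intervalIntegrable
    rw [huIcc]
    have c1 : ContinuousOn (fun z : ℝ => Real.exp (-c / z) / z ^ 1) (Set.Icc 0 β) :=
      contOn_exp_neg_div_pow c hc 1 one_ne_zero β
    have c2 : ContinuousOn (fun z : ℝ => Real.exp (-c / z) / z ^ 2) (Set.Icc 0 β) :=
      contOn_exp_neg_div_pow c hc 2 two_ne_zero β
    have hsum : ContinuousOn
        (fun z : ℝ => Real.exp (-c / z) / z ^ 1 + A * (Real.exp (-c / z) / z ^ 2))
        (Set.Icc 0 β) := c1.add (continuousOn_const.mul c2)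
    apply hsum.congr
    intro z _
    simp only [pow_one]
    rfl
  -- differentiability in the parameter
  have h_diff : ∀ᵐ t ∂(volume : Measure ℝ), t ∈ Ι 0 β →
      ∀ x ∈ Metric.ball α ε, HasDerivAt (fun x => (x / t) * Real.exp (-x / t)) (F' x t) x := by
    apply Filter.Eventually.of_forall
    intro z hz a _
    rw [huIoc] at hz
    have hz0 : z ≠ 0 := ne_of_gt hz.1
    have hdiv : HasDerivAt (fun a : ℝ => a / z) (1 / z) a := (hasDerivAt_id a).div_const z
    have hneg : HasDerivAt (fun a : ℝ => -a / z) (-(1 / z)) a := by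
      have := hdiv.neg
      apply this.congr_deriv rfl |>.congr_of_eventuallyEq
      filter_upwards with x
      rw [neg_div]
      rfl
    have hexp : HasDerivAt (fun a : ℝ => Real.exp (-a / z))
        (Real.exp (-a / z) * -(1 / z)) a := hneg.exp
    have hmul := hdiv.mul hexp
    convert hmul using 1
    · rfl
    · rfl
    · rfl
    simp only [hF'_def]
    field_simp
    ring
  have key := intervalIntegral.hasDerivAt_integral_of_dominated_loc_of_deriv_le
    (F := fun (x : ℝ) (z : ℝ) => (x / z) * Real.exp (-x / z)) (F' := F') (x₀ := α)
    (bound := bound) (Metric.ball_mem_nhds α hε) hF_meas hF_int hF'_meas h_bound bound_int h_diff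
  -- now compute the integral of F' α
  have int1 : IntervalIntegrable (fun z => Real.exp (-α / z) / z) volume 0 β := by
    apply ContinuousOn.intervalIntegrable
    rw [huIcc]
    have := contOn_exp_neg_div_pow α hα0 1 one_ne_zero β
    apply this.congr
    intro z _
    simp only [pow_one]
  have int2 : IntervalIntegrable (fun z => α * (Real.exp (-α / z) / z ^ 2)) volume 0 β :=
    by
    apply ContinuousOn.intervalIntegrable
    rw [huIcc]
    exact continuousOn_const.mul (contOn_exp_neg_div_pow α hα0 2 two_ne_zero β)
  have hI1 : (∫ z in (0:ℝ)..β, Real.exp (-α / z) / z) = α⁻¹ := by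
    have h1' := h1
    have heq : ∀ z : ℝ, (α / z) * Real.exp (-α / z) = α * (Real.exp (-α / z) / z) :=
      fun z => by ring
    simp_rw [heq] at h1'
    rw [intervalIntegral.integral_const_mul] at h1'
    field_simp at h1' ⊢
    linarith
  -- FTC for the second piece
  set G : ℝ → ℝ := fun z => if z ≤ 0 then 0 else Real.exp (-α / z) with hG_def
  have hGcont : ContinuousOn G (Set.Icc 0 β) := by
    intro z hz
    rcases eq_or_lt_of_le hz.1 with h0 | h0
    · rw [ContinuousWithinAt, ← h0]
      have hG0 : G 0 = 0 := by simp [hG_def]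
      rw [hG0]
      have hle : 𝓝[Set.Icc (0:ℝ) β] 0 ≤ 𝓝[Set.Ici (0:ℝ)] 0 :=
        nhdsWithin_mono _ Set.Icc_subset_Ici_self
      apply Tendsto.mono_left _ hle
      have hun : Set.Ici (0:ℝ) = {0} ∪ Set.Ioi 0 := by
        ext x; simp [le_iff_lt_or_eq, or_comm, eq_comm]
      rw [hun, nhdsWithin_union, tendsto_sup]
      constructor
      · rw [nhdsWithin_singleton]
        have := tendsto_pure_nhds G 0
        rwa [hG0] at this
      · have := tendsto_exp_neg_div_pow α hα0 0
        simp only [pow_zero, div_one] at this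
        apply this.congr'
        filter_upwards [self_mem_nhdsWithin] with x hx
        simp [hG_def, not_le.mpr (Set.mem_Ioi.mp hx)]
    · apply ContinuousAt.continuousWithinAt
      have hz0 : z ≠ 0 := ne_of_gt h0
      have hca' : ContinuousAt (fun z : ℝ => -α / z) z :=
        continuousAt_const.div continuousAt_id hz0
      have hca : ContinuousAt (fun z : ℝ => Real.exp (-α / z)) z := hca'.rexp
      apply hca.congr
      filter_upwards [eventually_gt_nhds h0] with x hx
      simp [hG_def, not_le.mpr hx]
  have hGderiv : ∀ x ∈ Set.Ioo (0:ℝ) β,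
      HasDerivAt G (α * (Real.exp (-α / x) / x ^ 2)) x := by
    intro x hx
    have hx0 : x ≠ 0 := ne_of_gt hx.1
    have hinv : HasDerivAt (fun z : ℝ => -α / z) (α / x ^ 2) x := by
      have h := (hasDerivAt_inv hx0).const_mul (-α)
      have : (fun z : ℝ => -α * z⁻¹) = fun z : ℝ => -α / z := by
        funext z; rw [div_eq_mul_inv]
      rw [this] at h
      convert h using 1
      · rfl
      · rfl
      field_simp
    have hexp : HasDerivAt (fun z : ℝ => Real.exp (-α / z))
        (Real.exp (-α / x) * (α / x ^ 2)) x := hinv.exp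
    have hGeq : G =ᶠ[𝓝 x] fun z : ℝ => Real.exp (-α / z) := by
      filter_upwards [eventually_gt_nhds hx.1] with y hy
      simp [hG_def, not_le.mpr hy]
    have := hexp.congr_of_eventuallyEq hGeq
    convert this using 1
    · rfl
    · rfl
    ring
  have hI2 : (∫ z in (0:ℝ)..β, α * (Real.exp (-α / z) / z ^ 2)) = α⁻¹ := by
    have hftc := intervalIntegral.integral_eq_sub_of_hasDeriv_right_of_le hβ0.le hGcont
      (fun x hx => (hGderiv x hx).hasDerivWithinAt) int2
    rw [hftc]
    have hGβ : G β = Real.exp (-α / β) := by simp [hG_def, not_le.mpr hβ0]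
    have hG0 : G 0 = 0 := by simp [hG_def]
    rw [hGβ, hG0, sub_zero]
    have hαβ : α / β = Real.log α := by
      rw [hβ]
      field_simp
    rw [neg_div, hαβ, Real.exp_neg, Real.exp_log hα0]
  have hE : (∫ t in (0:ℝ)..β, F' α t) = 0 := by
    simp only [hF'_def]
    rw [intervalIntegral.integral_sub int1 int2, hI1, hI2, sub_self]
  have hfin := key.2
  rw [hE] at hfin
  exact hfin
end

section
/- Let α ≈ 1.545 be the unique solution of ∫₀^β (α/z)e^{-α/z} dz = 1 with β = α/ln α. Then for every β' < β there exists δ > 0 such that ∫₀^{β'} (a/z)e^{-a/z} dz ≤ 1 - δ for all a ≥ 0. -/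
set_option maxHeartbeats 1000000

open MeasureTheory Set Real Filter intervalIntegral Topology

noncomputable def myE1 (x : ℝ) : ℝ := ∫ t in Set.Ioi x, Real.exp (-t) / t

lemma exp_neg_int (x : ℝ) : IntegrableOn (fun t : ℝ => Real.exp (-t)) (Set.Ioi x) := by
  have h := exp_neg_integrableOn_Ioi x one_pos
  have he : (fun t : ℝ => Real.exp (-1 * t)) = fun t : ℝ => Real.exp (-t) := by
    funext t; norm_num
  rwa [he] at h

lemma myE1_integrable {x : ℝ} (hx : 0 < x) :
    IntegrableOn (fun t => Real.exp (-t) / t) (Set.Ioi x) := by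
  have h : IntegrableOn (fun t : ℝ => Real.exp (-t) * x⁻¹) (Set.Ioi x) :=
    Integrable.mul_const (exp_neg_int x) (x⁻¹)
  refine Integrable.mono h ?_ ?_
  · exact ((Real.measurable_exp.comp measurable_neg).div measurable_id).aestronglyMeasurable
  · filter_upwards [ae_restrict_mem measurableSet_Ioi] with t ht
    have htpos : 0 < t := hx.trans ht
    have h2 : Real.exp (-t) / t ≤ Real.exp (-t) / x :=
      div_le_div_of_nonneg_left (Real.exp_pos _).le hx ht.le
    simp only [Real.norm_eq_abs]
    rw [abs_of_nonneg (by positivity), abs_of_nonneg (by positivity)]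
    calc Real.exp (-t) / t ≤ Real.exp (-t) / x := h2
    _ = Real.exp (-t) * x⁻¹ := by rw [div_eq_mul_inv]

lemma myE1_eq {x : ℝ} (hx : 0 < x) :
    myE1 x = (∫ t in x..1, Real.exp (-t) / t) + myE1 1 := by
  rcases le_or_gt x 1 with h | h
  · rw [intervalIntegral.integral_of_le h]
    unfold myE1
    rw [← Set.Ioc_union_Ioi_eq_Ioi h,
      MeasureTheory.setIntegral_union (Set.Ioc_disjoint_Ioi le_rfl) measurableSet_Ioi
        ((myE1_integrable hx).mono_set Set.Ioc_subset_Ioi_self) (myE1_integrable one_pos)]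
  · have h2 : myE1 1 = (∫ t in Set.Ioc 1 x, Real.exp (-t) / t) + myE1 x := by
      unfold myE1
      rw [← Set.Ioc_union_Ioi_eq_Ioi h.le,
        MeasureTheory.setIntegral_union (Set.Ioc_disjoint_Ioi le_rfl) measurableSet_Ioi
          ((myE1_integrable one_pos).mono_set Set.Ioc_subset_Ioi_self) (myE1_integrable hx)]
    rw [intervalIntegral.integral_symm, intervalIntegral.integral_of_le h.le]
    linarith

lemma contAt_integrand {x : ℝ} (hx : x ≠ 0) :
    ContinuousAt (fun t : ℝ => Real.exp (-t) / t) x :=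
  ((Real.continuous_exp.comp continuous_neg).continuousAt).div continuousAt_id hx

lemma myE1_hasDerivAt {x : ℝ} (hx : 0 < x) :
    HasDerivAt myE1 (-(Real.exp (-x) / x)) x := by
  have hii : IntervalIntegrable (fun t : ℝ => Real.exp (-t) / t) volume x 1 := by
    apply ContinuousOn.intervalIntegrable
    intro t ht
    have : (0:ℝ) < t := by
      have := ht.1
      rcases le_total x 1 with h | h
      · simp [Set.uIcc_of_le h] at ht; linarith [ht.1]
      · simp [Set.uIcc_of_ge h] at ht; linarith [ht.1]
    exact (contAt_integrand this.ne').continuousWithinAt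
  have hmeas : StronglyMeasurableAtFilter (fun t : ℝ => Real.exp (-t) / t) (𝓝 x) volume :=
    ⟨Set.univ, Filter.univ_mem,
      (((Real.measurable_exp.comp measurable_neg).div measurable_id).aestronglyMeasurable)⟩
  have hd : HasDerivAt (fun u => (∫ t in u..1, Real.exp (-t) / t) + myE1 1)
      (-(Real.exp (-x) / x)) x := by
    exact (intervalIntegral.integral_hasDerivAt_left hii hmeas
      (contAt_integrand hx.ne')).add_const _
  apply hd.congr_of_eventuallyEq
  filter_upwards [IsOpen.mem_nhds isOpen_Ioi hx] with y hy
  exact myE1_eq hy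

lemma myE1_le {x : ℝ} (hx : 0 < x) : myE1 x ≤ Real.exp (-x) / x := by
  have h1 : myE1 x ≤ ∫ t in Set.Ioi x, Real.exp (-t) * x⁻¹ := by
    apply MeasureTheory.setIntegral_mono_on (myE1_integrable hx)
      (Integrable.mul_const (exp_neg_int x) _)
      measurableSet_Ioi
    intro t ht
    rw [div_eq_mul_inv]
    exact mul_le_mul_of_nonneg_left (inv_anti₀ hx (le_of_lt ht)) (Real.exp_pos _).le
  have h2 : (∫ t in Set.Ioi x, Real.exp (-t) * x⁻¹) = Real.exp (-x) / x := by
    rw [MeasureTheory.integral_mul_const, integral_exp_neg_Ioi, div_eq_mul_inv]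
  linarith

lemma myE1_lt {x : ℝ} (hx : 1 ≤ x) : myE1 x < Real.exp (-x) := by
  have hx0 : (0:ℝ) < x := lt_of_lt_of_le one_pos hx
  have hsplit : myE1 x = (∫ t in Set.Ioc x (x+1), Real.exp (-t) / t) + myE1 (x+1) := by
    unfold myE1
    rw [← Set.Ioc_union_Ioi_eq_Ioi (by linarith : x ≤ x + 1),
      MeasureTheory.setIntegral_union (Set.Ioc_disjoint_Ioi le_rfl) measurableSet_Ioi
        ((myE1_integrable hx0).mono_set Set.Ioc_subset_Ioi_self) (myE1_integrable (by linarith))]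
  have hb1 : (∫ t in Set.Ioc x (x+1), Real.exp (-t) / t)
      ≤ Real.exp (-x) - Real.exp (-(x+1)) := by
    have hmono : (∫ t in Set.Ioc x (x+1), Real.exp (-t) / t)
        ≤ ∫ t in Set.Ioc x (x+1), Real.exp (-t) := by
      apply MeasureTheory.setIntegral_mono_on
        ((myE1_integrable hx0).mono_set Set.Ioc_subset_Ioi_self)
        ((exp_neg_int x).mono_set Set.Ioc_subset_Ioi_self)
        measurableSet_Ioc
      intro t ht
      have ht1 : (1:ℝ) ≤ t := le_trans hx ht.1.le
      calc Real.exp (-t) / t ≤ Real.exp (-t) / 1 :=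
        div_le_div_of_nonneg_left (Real.exp_pos _).le one_pos ht1
      _ = Real.exp (-t) := by rw [div_one]
    have hcalc : (∫ t in Set.Ioc x (x+1), Real.exp (-t))
        = Real.exp (-x) - Real.exp (-(x+1)) := by
      rw [← intervalIntegral.integral_of_le (by linarith : x ≤ x + 1)]
      have : (∫ t in x..(x+1), Real.exp (-t)) = ∫ t in (-(x+1))..(-x), Real.exp t := by
        simpa using intervalIntegral.integral_comp_neg (fun t => Real.exp t) (a := x) (b := x+1)
      rw [this, integral_exp]
    linarith
  have hb2 : myE1 (x+1) ≤ Real.exp (-(x+1)) / (x+1) := myE1_le (by linarith)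
  have hb3 : Real.exp (-(x+1)) / (x+1) ≤ Real.exp (-(x+1)) / 2 :=
    div_le_div_of_nonneg_left (Real.exp_pos _).le two_pos (by linarith)
  have : (0:ℝ) < Real.exp (-(x+1)) := Real.exp_pos _
  linarith

noncomputable def myPhi (x : ℝ) : ℝ := myE1 x - Real.exp (-x)

lemma myPhi_hasDerivAt {x : ℝ} (hx : 0 < x) :
    HasDerivAt myPhi (Real.exp (-x) * (1 - x⁻¹)) x := by
  have h1 : HasDerivAt (fun y : ℝ => Real.exp (-y)) (-Real.exp (-x)) x := by
    simpa using ((hasDerivAt_id x).neg).exp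
  have h := (myE1_hasDerivAt hx).sub h1
  refine h.congr_deriv ?_
  ring
lemma myPhi_anti {a b : ℝ} (ha : 0 < a) (hb : b ≤ 1) :
    AntitoneOn myPhi (Set.Icc a b) := by
  apply antitoneOn_of_deriv_nonpos (convex_Icc a b)
  · intro y hy
    have hy0 : 0 < y := lt_of_lt_of_le ha hy.1
    exact (myPhi_hasDerivAt hy0).continuousAt.continuousWithinAt
  · intro y hy
    rw [interior_Icc] at hy
    exact (myPhi_hasDerivAt (lt_trans ha hy.1)).differentiableAt.differentiableWithinAt
  · intro y hy
    rw [interior_Icc] at hy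
    have hy0 : 0 < y := lt_trans ha hy.1
    rw [(myPhi_hasDerivAt hy0).deriv]
    have h1 : (1:ℝ) ≤ y⁻¹ := (one_le_inv₀ hy0).mpr (le_of_lt (lt_of_lt_of_le hy.2 hb))
    have := (Real.exp_pos (-y)).le
    nlinarith

lemma myPhi_neg {x : ℝ} (hx : 1 ≤ x) : myPhi x < 0 := by
  have := myE1_lt hx
  unfold myPhi; linarith

noncomputable def myPsi (β : ℝ) (a : ℝ) : ℝ := a * myE1 (a / β)

lemma myPsi_hasDerivAt {β a : ℝ} (hβ : 0 < β) (ha : 0 < a) :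
    HasDerivAt (myPsi β) (myPhi (a / β)) a := by
  have hx : 0 < a / β := div_pos ha hβ
  have h1 : HasDerivAt (fun y : ℝ => y / β) (1 / β) a := by
    simpa using (hasDerivAt_id a).div_const β
  have h2 : HasDerivAt (fun y : ℝ => myE1 (y / β))
      (-(Real.exp (-(a/β)) / (a/β)) * (1/β)) a := HasDerivAt.comp (h₂ := myE1) a (myE1_hasDerivAt hx) h1
  have h3 := (hasDerivAt_id a).mul h2
  have hval : 1 * myE1 (a/β) + a * (-(Real.exp (-(a/β)) / (a/β)) * (1/β))
      = myPhi (a / β) := by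
    unfold myPhi
    field_simp
    ring
  rw [← hval]
  exact h3

lemma myPsi_le_max {β a α : ℝ} (hβ : 0 < β) (ha : 0 < a) (hα : 0 < α)
    (hx1 : α / β < 1) (hphi : myPhi (α / β) = 0) :
    myPsi β a ≤ myPsi β α := by
  set x₀ := α / β with hx₀
  have hx₀pos : 0 < x₀ := div_pos hα hβ
  rcases le_total a α with h | h
  · -- MonotoneOn on [a, α]
    have hmono : MonotoneOn (myPsi β) (Set.Icc a α) := by
      apply monotoneOn_of_deriv_nonneg (convex_Icc a α)
      · intro y hy
        exact (myPsi_hasDerivAt hβ (lt_of_lt_of_le ha hy.1)).continuousAt.continuousWithinAt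
      · intro y hy
        rw [interior_Icc] at hy
        exact (myPsi_hasDerivAt hβ (lt_trans ha hy.1)).differentiableAt.differentiableWithinAt
      · intro y hy
        rw [interior_Icc] at hy
        have hy0 : 0 < y := lt_trans ha hy.1
        rw [(myPsi_hasDerivAt hβ hy0).deriv]
        have hyx : y / β ≤ x₀ := by
          rw [hx₀]; gcongr
          exact hy.2.le
        have h0 := myPhi_anti (div_pos hy0 hβ) hx1.le (Set.left_mem_Icc.mpr hyx)
          (Set.right_mem_Icc.mpr hyx) hyx
        linarith
    exact hmono ⟨le_refl _, h⟩ ⟨h, le_refl _⟩ h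
  · have hanti : AntitoneOn (myPsi β) (Set.Icc α a) := by
      apply antitoneOn_of_deriv_nonpos (convex_Icc α a)
      · intro y hy
        exact (myPsi_hasDerivAt hβ (lt_of_lt_of_le hα hy.1)).continuousAt.continuousWithinAt
      · intro y hy
        rw [interior_Icc] at hy
        exact (myPsi_hasDerivAt hβ (lt_trans hα hy.1)).differentiableAt.differentiableWithinAt
      · intro y hy
        rw [interior_Icc] at hy
        have hy0 : 0 < y := lt_trans hα hy.1
        rw [(myPsi_hasDerivAt hβ hy0).deriv]
        have hyx : x₀ ≤ y / β := by
          rw [hx₀]; gcongr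
          exact hy.1.le
        rcases le_or_gt (y / β) 1 with hc | hc
        · have h0 := myPhi_anti hx₀pos hc (Set.left_mem_Icc.mpr hyx)
            (Set.right_mem_Icc.mpr hyx) hyx
          linarith
        · exact (myPhi_neg hc.le).le
    exact hanti ⟨le_refl _, h⟩ ⟨h, le_refl _⟩ h

lemma key_subst {a b : ℝ} (ha : 0 < a) (hb : 0 < b) :
    (∫ z in (0:ℝ)..b, (a / z) * Real.exp (-a / z)) = a * myE1 (a / b) := by
  have hab : 0 < a / b := div_pos ha hb
  have himg : (fun t : ℝ => a / t) '' Set.Ioi (a / b) = Set.Ioo 0 b := by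
    ext y
    simp only [Set.mem_image, Set.mem_Ioi, Set.mem_Ioo]
    constructor
    · rintro ⟨t, ht, rfl⟩
      have ht0 : 0 < t := hab.trans ht
      refine ⟨div_pos ha ht0, ?_⟩
      rw [div_lt_iff₀ ht0]
      rw [div_lt_iff₀ hb] at ht
      linarith [ht]
    · rintro ⟨hy0, hyb⟩
      refine ⟨a / y, ?_, ?_⟩
      · exact div_lt_div_of_pos_left ha hy0 hyb
      · field_simp
  have hderiv : ∀ t ∈ Set.Ioi (a / b),
      HasDerivWithinAt (fun t : ℝ => a / t) (a * -(t ^ 2)⁻¹) (Set.Ioi (a / b)) t := by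
    intro t ht
    have ht0 : t ≠ 0 := (hab.trans ht).ne'
    have h := (hasDerivAt_inv ht0).const_mul a
    have he : (fun t : ℝ => a * t⁻¹) = fun t : ℝ => a / t := by
      funext u; rw [div_eq_mul_inv]
    rw [he] at h
    exact h.hasDerivWithinAt
  have hinj : Set.InjOn (fun t : ℝ => a / t) (Set.Ioi (a / b)) := by
    intro s hs t ht h
    have hs0 : (0:ℝ) < s := hab.trans hs
    have ht0 : (0:ℝ) < t := hab.trans ht
    field_simp at h
    exact h.symm
  have hsub := MeasureTheory.integral_image_eq_integral_abs_deriv_smul measurableSet_Ioi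
    hderiv hinj (fun z => (a / z) * Real.exp (-a / z))
  rw [himg] at hsub
  rw [intervalIntegral.integral_of_le hb.le, MeasureTheory.integral_Ioc_eq_integral_Ioo, hsub]
  have hcongr : ∀ t ∈ Set.Ioi (a / b),
      |a * -(t ^ 2)⁻¹| • ((a / (a / t)) * Real.exp (-a / (a / t)))
        = a * (Real.exp (-t) / t) := by
    intro t ht
    have ht0 : (0:ℝ) < t := hab.trans ht
    have h1 : a / (a / t) = t := by field_simp
    have h2 : -a / (a / t) = -t := by
      field_simp
    have h3 : a * -(t^2)⁻¹ ≤ 0 := by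
      have h4 : (0:ℝ) < (t^2)⁻¹ := by positivity
      nlinarith
    rw [h1, h2, smul_eq_mul, abs_of_nonpos h3]
    field_simp
  rw [MeasureTheory.setIntegral_congr_fun measurableSet_Ioi hcongr,
    MeasureTheory.integral_const_mul]
  rfl

lemma neg_case_zero {a c : ℝ} (ha : 0 < a) (hc : c < 0) :
    (∫ z in (0:ℝ)..c, (a / z) * Real.exp (-a / z)) = 0 := by
  have hF : ∀ z : ℝ, z ≠ 0 → HasDerivAt (fun z : ℝ => z * Real.exp (-a / z))
      (Real.exp (-a / z) * (1 + a / z)) z := by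
    intro z hz
    have h1 : HasDerivAt (fun z : ℝ => -a / z) (a / z ^ 2) z := by
      have h := (hasDerivAt_inv hz).const_mul (-a)
      have he : (fun z : ℝ => -a * z⁻¹) = fun z : ℝ => -a / z := by
        funext u; rw [div_eq_mul_inv]
      rw [he] at h
      refine h.congr_deriv ?_
      ring
    have h2 := h1.exp
    have h3 := (hasDerivAt_id z).mul h2
    refine h3.congr_deriv ?_
    simp only [id]
    field_simp
  have hni : ¬ IntervalIntegrable (fun z => (a / z) * Real.exp (-a / z)) volume c 0 := by
    apply not_intervalIntegrable_of_tendsto_norm_atTop_of_deriv_isBigO_filter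
      (f := fun z : ℝ => z * Real.exp (-a / z)) (𝓝[<] (0:ℝ))
    · rw [Set.uIcc_of_le hc.le]
      exact Icc_mem_nhdsLT_of_mem ⟨hc, le_refl _⟩
    · filter_upwards [self_mem_nhdsWithin] with z hz
      exact (hF z (ne_of_lt hz)).differentiableAt
    · -- norm tends to atTop
      have hneg : Tendsto (fun z : ℝ => -z) (𝓝[<] (0:ℝ)) (𝓝[>] (0:ℝ)) := by
        apply tendsto_nhdsWithin_of_tendsto_nhds_of_eventually_within
        · simpa using (continuous_neg.tendsto (0:ℝ)).mono_left nhdsWithin_le_nhds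
        · filter_upwards [self_mem_nhdsWithin] with z hz
          simpa using hz
      have hinv : Tendsto (fun z : ℝ => ((-z)⁻¹ : ℝ)) (𝓝[<] (0:ℝ)) atTop :=
        tendsto_inv_nhdsGT_zero.comp hneg
      have hmul : Tendsto (fun z : ℝ => a ^ 2 / 4 * (-z)⁻¹) (𝓝[<] (0:ℝ)) atTop :=
        hinv.const_mul_atTop (by positivity)
      apply tendsto_atTop_mono' _ _ hmul
      filter_upwards [self_mem_nhdsWithin] with z hz
      have hz0 : z < 0 := hz
      have hw : (0:ℝ) < -z := by linarith
      have harg : -a / z = a * (-z)⁻¹ := by field_simp [hz0.ne]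
      set x := a * (-z)⁻¹ with hxdef
      have hxpos : 0 < x := by positivity
      have hq : x ^ 2 / 4 ≤ Real.exp x := by
        have h5 : x / 2 + 1 ≤ Real.exp (x / 2) := Real.add_one_le_exp _
        have h6 : Real.exp (x / 2) * Real.exp (x / 2) = Real.exp x := by
          rw [← Real.exp_add]; ring_nf
        nlinarith [hxpos.le]
      have hkey : -z * (x ^ 2 / 4) = a ^ 2 / 4 * (-z)⁻¹ := by
        rw [hxdef]; field_simp [hz0.ne]
      calc a ^ 2 / 4 * (-z)⁻¹ = -z * (x ^ 2 / 4) := hkey.symm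
      _ ≤ -z * Real.exp x := by
        exact mul_le_mul_of_nonneg_left hq hw.le
      _ = ‖z * Real.exp (-a / z)‖ := by
        rw [harg, Real.norm_eq_abs, abs_mul, abs_of_neg hz0,
          abs_of_pos (Real.exp_pos _)]
    · -- deriv isBigO
      rw [Asymptotics.isBigO_iff]
      refine ⟨3/2, ?_⟩
      filter_upwards [Ioo_mem_nhdsLT (show -(a/2) < (0:ℝ) by linarith)]
        with z hz
      have hz0 : z < 0 := hz.2
      have hzl : -(a/2) < z := hz.1
      have hderiv : deriv (fun z : ℝ => z * Real.exp (-a / z)) z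
          = Real.exp (-a / z) * (1 + a / z) := (hF z hz0.ne).deriv
      have hv : a / z ≤ -2 := by
        rw [div_le_iff_of_neg hz0]
        linarith
      have hvneg : a / z < 0 := by linarith
      rw [hderiv, Real.norm_eq_abs, Real.norm_eq_abs, abs_mul, abs_mul,
        abs_of_pos (Real.exp_pos _),
        abs_of_nonpos (by linarith : 1 + a / z ≤ 0), abs_of_neg hvneg]
      have hE := (Real.exp_pos (-a / z)).le
      nlinarith
  rw [intervalIntegral.integral_symm, intervalIntegral.integral_undef hni, neg_zero]

theorem integral_lt_one_for_smaller_beta (α β : ℝ) (hα : 1 < α)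
    (hβ : β = α / Real.log α)
    (h1 : (∫ z in (0:ℝ)..β, (α / z) * Real.exp (-α / z)) = 1) :
    ∀ β' : ℝ, β' < β → ∃ δ : ℝ, 0 < δ ∧ ∀ a : ℝ, 0 ≤ a →
      (∫ z in (0:ℝ)..β', (a / z) * Real.exp (-a / z)) ≤ 1 - δ := by
  have hαpos : (0:ℝ) < α := by linarith
  have hlog : 0 < Real.log α := Real.log_pos hα
  have hβpos : 0 < β := by rw [hβ]; positivity
  have hx₀ : α / β = Real.log α := by
    rw [hβ]
    field_simp
  have hsubα := key_subst hαpos hβpos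
  rw [hsubα] at h1
  have hE : myE1 (α / β) = Real.exp (-(α / β)) := by
    rw [hx₀, Real.exp_neg, Real.exp_log hαpos]
    rw [hx₀] at h1
    field_simp at h1 ⊢
    linarith
  have hphi : myPhi (α / β) = 0 := by
    unfold myPhi
    rw [hE]
    ring
  have hx1 : α / β < 1 := by
    by_contra h
    push_neg at h
    have := myPhi_neg h
    linarith
  have bound_one : ∀ a : ℝ, 0 ≤ a →
      (∫ z in (0:ℝ)..β, (a / z) * Real.exp (-a / z)) ≤ 1 := by
    intro a ha0
    rcases ha0.eq_or_lt with rfl | hapos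
    · simp
    · rw [key_subst hapos hβpos]
      exact le_of_le_of_eq (myPsi_le_max hβpos hapos hαpos hx1 hphi) h1
  intro β' hβ'
  rcases le_or_gt β' 0 with hneg | hpos
  · refine ⟨1, one_pos, fun a ha0 => ?_⟩
    norm_num
    rcases ha0.eq_or_lt with rfl | hapos
    · simp
    · rcases hneg.eq_or_lt with rfl | hβ'neg
      · simp
      · rw [neg_case_zero hapos hβ'neg]
  · refine ⟨1 - β' / β, by rw [sub_pos]; exact (div_lt_one hβpos).mpr hβ', fun a ha0 => ?_⟩
    set c := β' / β with hcdef
    have hc0 : 0 < c := div_pos hpos hβpos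
    have hcβ : c * β = β' := by
      rw [hcdef]; field_simp
    have hscale := intervalIntegral.smul_integral_comp_mul_left
      (a := (0:ℝ)) (b := β) (f := fun z => (a / z) * Real.exp (-a / z)) c
    rw [mul_zero, hcβ] at hscale
    rw [← hscale]
    have hcongr : (∫ x in (0:ℝ)..β, (a / (c * x)) * Real.exp (-a / (c * x)))
        = ∫ x in (0:ℝ)..β, ((a / c) / x) * Real.exp (-(a / c) / x) := by
      apply intervalIntegral.integral_congr
      intro x _
      simp only
      rw [← div_div, ← div_div, neg_div]
    have hb1 := bound_one (a / c) (by positivity)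
    calc c • (∫ x in (0:ℝ)..β, (a / (c * x)) * Real.exp (-a / (c * x)))
        = c * ∫ x in (0:ℝ)..β, ((a / c) / x) * Real.exp (-(a / c) / x) := by
          rw [smul_eq_mul, hcongr]
    _ ≤ c * 1 := mul_le_mul_of_nonneg_left hb1 hc0.le
    _ = 1 - (1 - β' / β) := by rw [hcdef]; ring
end

section
/- Consider a bit string of length n with ℓ ones, where ℓ ≤ n/20. Choose a uniformly random subset K of positions with |K| = k, where 2 ≤ k ≤ n/10, and flip all bits in K. Fix a position i that currently holds a one. Then the probability that bit i is flipped and the number of ones strictly decreases is at most 160ℓ/n². -/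
open Finset

private lemma pow_mul_descFactorial_le (a n m : ℕ) (h : a ≤ n) :
    n ^ m * a.descFactorial m ≤ a ^ m * n.descFactorial m := by
  induction m with
  | zero => simp
  | succ m ih =>
    rw [Nat.descFactorial_succ, Nat.descFactorial_succ, pow_succ, pow_succ]
    have key : n * (a - m) ≤ a * (n - m) := by
      rcases le_total a m with h' | h'
      · simp [Nat.sub_eq_zero_of_le h']
      · obtain ⟨x, hx⟩ : ∃ x, a = x + m := ⟨a - m, by omega⟩
        obtain ⟨y, hy⟩ : ∃ y, n = y + m := ⟨n - m, by omega⟩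
        have hxy : x ≤ y := by omega
        subst hx hy
        simp only [Nat.add_sub_cancel]
        calc (y + m) * x = x * y + m * x := by ring
          _ ≤ x * y + m * y := Nat.add_le_add_left (Nat.mul_le_mul_left m hxy) _
          _ = (x + m) * y := by ring
    calc n ^ m * n * ((a - m) * a.descFactorial m)
        = (n * (a - m)) * (n ^ m * a.descFactorial m) := by ring
      _ ≤ (a * (n - m)) * (a ^ m * n.descFactorial m) := Nat.mul_le_mul key ih
      _ = a ^ m * a * ((n - m) * n.descFactorial m) := by ring

private lemma pow_mul_choose_le (a n m : ℕ) (h : a ≤ n) :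
    n ^ m * a.choose m ≤ a ^ m * n.choose m := by
  rw [Nat.choose_eq_descFactorial_div_factorial, Nat.choose_eq_descFactorial_div_factorial,
    ← Nat.mul_div_assoc _ (Nat.factorial_dvd_descFactorial a m),
    ← Nat.mul_div_assoc _ (Nat.factorial_dvd_descFactorial n m)]
  exact Nat.div_le_div_right (pow_mul_descFactorial_le a n m h)

private lemma choose_le_two_pow' (k s : ℕ) : k.choose s ≤ 2 ^ k := by
  rcases le_or_gt s k with h | h
  · calc k.choose s ≤ ∑ j ∈ range (k + 1), k.choose j :=
        Finset.single_le_sum (fun j _ => Nat.zero_le _) (mem_range.2 (by omega))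
      _ = 2 ^ k := Nat.sum_range_choose k
  · rw [Nat.choose_eq_zero_of_lt h]; exact Nat.zero_le _

private lemma key_pow_bound : ∀ k : ℕ, 2 ≤ k → k * 2 ^ k * 20 ≤ 144 * 20 ^ (k / 2) := by
  intro k
  induction k using Nat.strong_induction_on with
  | _ k ih =>
    intro hk
    rcases lt_or_ge k 4 with h4 | h4
    · interval_cases k <;> norm_num
    · have hj2 : 2 ≤ k - 2 := by omega
      have hjlt : k - 2 < k := by omega
      have hrec := ih (k - 2) hjlt hj2
      have hk' : k = (k - 2) + 2 := by omega
      set j := k - 2 with hj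
      rw [hk']
      have hdiv : (j + 2) / 2 = j / 2 + 1 := by omega
      calc (j + 2) * 2 ^ (j + 2) * 20 = (4 * (j + 2)) * (2 ^ j * 20) := by ring
        _ ≤ (20 * j) * (2 ^ j * 20) := by
            have : 4 * (j + 2) ≤ 20 * j := by omega
            exact Nat.mul_le_mul_right _ this
        _ = 20 * (j * 2 ^ j * 20) := by ring
        _ ≤ 20 * (144 * 20 ^ (j / 2)) := Nat.mul_le_mul_left _ hrec
        _ = 144 * 20 ^ (j / 2 + 1) := by ring
        _ = 144 * 20 ^ ((j + 2) / 2) := by rw [hdiv]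

private lemma count_le_aux (n ℓ k : ℕ) (ones : Finset (Fin n)) (i : Fin n)
    (hones : ones.card = ℓ) (hi : i ∈ ones) :
    (((Finset.univ.powersetCard k).filter
        (fun K : Finset (Fin n) => i ∈ K ∧ k < 2 * (K ∩ ones).card)).card : ℕ)
      ≤ (ℓ - 1).choose (k / 2) * (n - (k / 2 + 1)).choose (k - (k / 2 + 1)) := by
  classical
  set m := k / 2 with hm
  set F := (Finset.univ.powersetCard k).filter
      (fun K : Finset (Fin n) => i ∈ K ∧ k < 2 * (K ∩ ones).card) with hF
  set B : Finset ((_ : Finset (Fin n)) × Finset (Fin n)) :=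
    ((ones.erase i).powersetCard m).sigma
      (fun S => (Finset.univ \ insert i S).powersetCard (k - (m + 1))) with hB
  have pick : ∀ K : Finset (Fin n), ∃ S : Finset (Fin n),
      K ∈ F → S ⊆ (K ∩ ones).erase i ∧ S.card = m := by
    intro K
    by_cases hK : K ∈ F
    · rw [hF, mem_filter, mem_powersetCard] at hK
      obtain ⟨⟨-, hcard⟩, hiK, hmaj⟩ := hK
      have hic : i ∈ K ∩ ones := mem_inter.2 ⟨hiK, hi⟩
      have hlt : m < (K ∩ ones).card := by
        rw [hm, Nat.div_lt_iff_lt_mul (by norm_num : (0:ℕ) < 2)]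
        omega
      have hle : m ≤ ((K ∩ ones).erase i).card := by
        rw [card_erase_of_mem hic]; omega
      obtain ⟨S, hS1, hS2⟩ := Finset.exists_subset_card_eq hle
      exact ⟨S, fun _ => ⟨hS1, hS2⟩⟩
    · exact ⟨∅, fun h => absurd h hK⟩
  choose pk hpk using pick
  have hcardB : B.card = (ℓ - 1).choose m * (n - (m + 1)).choose (k - (m + 1)) := by
    rw [hB, Finset.card_sigma]
    have : ∀ S ∈ (ones.erase i).powersetCard m,
        ((Finset.univ \ insert i S).powersetCard (k - (m + 1))).card
          = (n - (m + 1)).choose (k - (m + 1)) := by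
      intro S hS
      rw [mem_powersetCard] at hS
      have hiS : i ∉ S := fun h => notMem_erase i ones (hS.1 h)
      rw [card_powersetCard, card_sdiff_of_subset (subset_univ _), card_insert_of_notMem hiS,
        hS.2, card_univ, Fintype.card_fin]
    rw [Finset.sum_congr rfl this, Finset.sum_const, card_powersetCard,
      card_erase_of_mem hi, hones, smul_eq_mul]
  rw [← hcardB]
  apply Finset.card_le_card_of_injOn (fun K => ⟨pk K, K \ insert i (pk K)⟩)
  · intro K hK
    have hK' := hK
    rw [hF, mem_coe, mem_filter, mem_powersetCard] at hK'
    obtain ⟨⟨-, hcard⟩, hiK, hmaj⟩ := hK'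
    obtain ⟨hS1, hS2⟩ := hpk K hK
    have hiS : i ∉ pk K := fun h => notMem_erase i (K ∩ ones) (hS1 h)
    have hSK : pk K ⊆ K :=
      (hS1.trans (erase_subset i (K ∩ ones))).trans inter_subset_left
    have hins : insert i (pk K) ⊆ K := insert_subset hiK hSK
    simp only [mem_coe]
    rw [hB, Finset.mem_sigma]
    constructor
    · rw [mem_powersetCard]
      exact ⟨hS1.trans (erase_subset_erase i inter_subset_right), hS2⟩
    · rw [mem_powersetCard]
      refine ⟨sdiff_subset_sdiff (subset_univ K) le_rfl, ?_⟩
      rw [card_sdiff_of_subset hins, card_insert_of_notMem hiS, hS2, hcard]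
  · intro K₁ hK₁ K₂ hK₂ heq
    simp only [mem_coe] at hK₁ hK₂
    obtain ⟨h1, h2⟩ := Sigma.mk.inj_iff.1 heq
    have h2' : K₁ \ insert i (pk K₁) = K₂ \ insert i (pk K₂) := eq_of_heq h2
    have ins1 : insert i (pk K₁) ⊆ K₁ := by
      have hK' := hK₁
      rw [hF, mem_filter] at hK'
      exact insert_subset hK'.2.1
        (((hpk K₁ hK₁).1.trans (erase_subset i (K₁ ∩ ones))).trans inter_subset_left)
    have ins2 : insert i (pk K₂) ⊆ K₂ := by
      have hK' := hK₂
      rw [hF, mem_filter] at hK'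
      exact insert_subset hK'.2.1
        (((hpk K₂ hK₂).1.trans (erase_subset i (K₂ ∩ ones))).trans inter_subset_left)
    calc K₁ = insert i (pk K₁) ∪ (K₁ \ insert i (pk K₁)) :=
          (union_sdiff_of_subset ins1).symm
      _ = insert i (pk K₂) ∪ (K₂ \ insert i (pk K₂)) := by rw [h2', h1]
      _ = K₂ := union_sdiff_of_subset ins2

theorem multi_bit_flip_improvement_probability
    (n ℓ k : ℕ) (ones : Finset (Fin n)) (i : Fin n)
    (hones : ones.card = ℓ) (hi : i ∈ ones)
    (hℓ : (ℓ:ℝ) ≤ (n:ℝ)/20) (hk2 : 2 ≤ k) (hkn : (k:ℝ) ≤ (n:ℝ)/10) :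
    (((Finset.univ.powersetCard k).filter
        (fun K : Finset (Fin n) => i ∈ K ∧ k < 2 * (K ∩ ones).card)).card : ℝ)
        / (Nat.choose n k : ℝ)
      ≤ 160 * ℓ / (n:ℝ)^2 := by
  -- numeric hypotheses in ℕ
  have h10k : 10 * k ≤ n := by
    have : ((10 * k : ℕ) : ℝ) ≤ (n : ℝ) := by push_cast; linarith
    exact_mod_cast this
  have h20ℓ : 20 * ℓ ≤ n := by
    have : ((20 * ℓ : ℕ) : ℝ) ≤ (n : ℝ) := by push_cast; linarith
    exact_mod_cast this
  have hkn' : k ≤ n := by omega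
  have hn20 : 20 ≤ n := by omega
  set m := k / 2 with hm
  set s := m + 1 with hs
  have h2m : 2 * (k / 2) ≤ k := Nat.mul_div_le k 2
  have hm1 : 1 ≤ m := by rw [hm]; omega
  obtain ⟨p, hp⟩ : ∃ p, m = p + 1 := ⟨m - 1, by omega⟩
  have hsk : s ≤ k := by omega
  have h20m : 20 * m ≤ n := by omega
  have hnm : 19 * n ≤ 20 * (n - m) := by omega
  -- abbreviations
  set A := (((Finset.univ.powersetCard k).filter
      (fun K : Finset (Fin n) => i ∈ K ∧ k < 2 * (K ∩ ones).card)).card)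
  set A1 := (ℓ - 1).choose m
  set Bm := n.choose m
  set Cs := n.choose s
  set Cnk := n.choose k
  set D := k.choose s
  set Cns' := (n - s).choose (k - s)
  have hA : A ≤ A1 * Cns' := count_le_aux n ℓ k ones i hones hi
  -- main nat inequality G1
  have f1 : n ^ m * A1 ≤ ℓ ^ m * Bm := by
    calc n ^ m * A1 ≤ (ℓ - 1) ^ m * Bm := pow_mul_choose_le (ℓ - 1) n m (by omega)
      _ ≤ ℓ ^ m * Bm := Nat.mul_le_mul_right _ (Nat.pow_le_pow_left (by omega) m)
  have f2 : 20 ^ p * ℓ ^ m ≤ ℓ * n ^ p := by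
    calc 20 ^ p * ℓ ^ m = (20 * ℓ) ^ p * ℓ := by rw [hp]; ring
      _ ≤ n ^ p * ℓ := Nat.mul_le_mul_right _ (Nat.pow_le_pow_left h20ℓ p)
      _ = ℓ * n ^ p := by ring
  have f3 : Cs * s = Bm * (n - m) := Nat.choose_succ_right_eq n m
  have f4 : D ≤ 2 ^ k := choose_le_two_pow' k s
  have f5 : k * 2 ^ k ≤ 144 * 20 ^ p := by
    have h := key_pow_bound k hk2
    rw [← hm, hp, pow_succ] at h
    have : k * 2 ^ k * 20 ≤ 144 * 20 ^ p * 20 := by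
      calc k * 2 ^ k * 20 ≤ 144 * (20 ^ p * 20) := h
        _ = 144 * 20 ^ p * 20 := by ring
    exact Nat.le_of_mul_le_mul_right this (by norm_num)
  have hG1 : n ^ 2 * (A1 * D) ≤ 160 * (ℓ * Cs) := by
    have hP : 0 < 20 ^ p * n ^ m * (n - m) := by
      have : 0 < n - m := by omega
      positivity
    refine Nat.le_of_mul_le_mul_left ?_ hP
    calc 20 ^ p * n ^ m * (n - m) * (n ^ 2 * (A1 * D))
        = (n ^ 2 * (n - m) * D) * (20 ^ p * (n ^ m * A1)) := by ring
      _ ≤ (n ^ 2 * (n - m) * 2 ^ k) * (20 ^ p * (ℓ ^ m * Bm)) :=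
          Nat.mul_le_mul
            (Nat.mul_le_mul_left _ f4)
            (Nat.mul_le_mul_left _ f1)
      _ = (n ^ 2 * 2 ^ k) * ((20 ^ p * ℓ ^ m) * (Bm * (n - m))) := by ring
      _ = (n ^ 2 * 2 ^ k) * ((20 ^ p * ℓ ^ m) * (Cs * s)) := by rw [f3]
      _ ≤ (n ^ 2 * 2 ^ k) * ((ℓ * n ^ p) * (Cs * k)) :=
          Nat.mul_le_mul_left _ (Nat.mul_le_mul f2 (Nat.mul_le_mul_left _ hsk))
      _ = ((k * 2 ^ k) * n) * ((n ^ p * n) * (ℓ * Cs)) := by ring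
      _ ≤ ((144 * 20 ^ p) * n) * ((n ^ p * n) * (ℓ * Cs)) :=
          Nat.mul_le_mul_right _ (Nat.mul_le_mul_right _ f5)
      _ ≤ (20 ^ p * (160 * (n - m))) * ((n ^ p * n) * (ℓ * Cs)) := by
          refine Nat.mul_le_mul_right _ ?_
          calc (144 * 20 ^ p) * n = 20 ^ p * (144 * n) := by ring
            _ ≤ 20 ^ p * (160 * (n - m)) := Nat.mul_le_mul_left _ (by omega)
      _ = 20 ^ p * n ^ m * (n - m) * (160 * (ℓ * Cs)) := by rw [hp]; ring
  -- identity
  have hid : Cnk * D = Cs * Cns' := Nat.choose_mul hsk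
  have hD : 0 < D := Nat.choose_pos hsk
  -- final nat inequality
  have hN : n ^ 2 * A ≤ 160 * (ℓ * Cnk) := by
    refine Nat.le_of_mul_le_mul_left ?_ hD
    calc D * (n ^ 2 * A) ≤ D * (n ^ 2 * (A1 * Cns')) :=
          Nat.mul_le_mul_left _ (Nat.mul_le_mul_left _ hA)
      _ = (n ^ 2 * (A1 * D)) * Cns' := by ring
      _ ≤ (160 * (ℓ * Cs)) * Cns' := Nat.mul_le_mul_right _ hG1
      _ = 160 * ℓ * (Cs * Cns') := by ring
      _ = 160 * ℓ * (Cnk * D) := by rw [hid]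
      _ = D * (160 * (ℓ * Cnk)) := by ring
  -- cast to ℝ
  have hCnk : (0:ℝ) < Cnk := by exact_mod_cast Nat.choose_pos hkn'
  have hn2 : (0:ℝ) < (n:ℝ) ^ 2 := by
    have : (0:ℝ) < (n:ℝ) := by exact_mod_cast (by omega : 0 < n)
    positivity
  rw [div_le_div_iff₀ hCnk hn2]
  have := (Nat.cast_le (α := ℝ)).2 hN
  push_cast at this ⊢
  linarith
end

section
/- Let w : Fin n → ℝ with all w_i > 0, define f(x) = ∑_i w_i x_i for x ∈ {0,1}ⁿ. Fix a nonempty set I ⊆ Fin n of positions to flip, let x be a uniformly random point of {0,1}ⁿ, and let y be x with all bits in I flipped. Then P(f(y) > f(x)) = (1 - P(f(y) = f(x)))/2, and P(f(y) = f(x)) ≤ 1/2; hence P(f(y) > f(x)) ≥ (1 - P(f(y)=f(x)))/4 ≥ 1/4. -/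
open scoped Classical

theorem linear_function_flip_probabilities
    (n : ℕ) (w : Fin n → ℝ) (hw : ∀ i, 0 < w i)
    (I : Finset (Fin n)) (hI : I.Nonempty)
    (f : (Fin n → Bool) → ℝ)
    (hf : f = fun x => ∑ i, w i * (if x i then 1 else 0))
    (flip : (Fin n → Bool) → (Fin n → Bool))
    (hflip : flip = fun x j => if j ∈ I then !(x j) else x j)
    (Pgt Peq : ℝ)
    (hPgt : Pgt = ((Finset.univ.filter
        (fun x : Fin n → Bool => f (flip x) > f x)).card : ℝ) / 2^n)
    (hPeq : Peq = ((Finset.univ.filter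
        (fun x : Fin n → Bool => f (flip x) = f x)).card : ℝ) / 2^n) :
    Pgt = (1 - Peq) / 2 ∧ Peq ≤ 1/2 ∧ Pgt ≥ (1 - Peq) / 4 ∧ Pgt ≥ 1/4 := by
  classical
  set g : (Fin n → Bool) → ℝ := fun x => f (flip x) - f x with hg
  have hgsum : ∀ x, g x = ∑ i ∈ I, w i * (if x i then (-1:ℝ) else 1) := by
    intro x
    simp only [hg, hf, hflip]
    rw [← Finset.sum_sub_distrib]
    rw [← Finset.sum_subset (Finset.subset_univ I)]
    · apply Finset.sum_congr rfl
      intro i hi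
      simp only [hi, if_true]
      cases x i <;> simp <;> ring
    · intro i _ hi
      simp [hi]
  -- complement map
  have hgc : ∀ x, g (fun i => !(x i)) = - g x := by
    intro x
    rw [hgsum, hgsum, ← Finset.sum_neg_distrib]
    apply Finset.sum_congr rfl
    intro i _
    cases x i <;> simp
  set A := Finset.univ.filter (fun x : Fin n → Bool => 0 < g x) with hA
  set B := Finset.univ.filter (fun x : Fin n → Bool => g x < 0) with hB
  set E := Finset.univ.filter (fun x : Fin n → Bool => g x = 0) with hE
  have hAB : A.card = B.card := by
    apply Finset.card_bij (fun x _ => fun i => !(x i))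
    · intro x hx
      simp only [hB, Finset.mem_filter, Finset.mem_univ, true_and]
      rw [hgc]
      simp only [hA, Finset.mem_filter] at hx
      linarith [hx.2]
    · intro x _ y _ h
      funext i
      have := congrFun h i
      cases hxi : x i <;> cases hyi : y i <;> simp [hxi, hyi] at this ⊢
    · intro y hy
      refine ⟨fun i => !(y i), ?_, by funext i; simp⟩
      simp only [hA, Finset.mem_filter, Finset.mem_univ, true_and]
      rw [hgc]
      simp only [hB, Finset.mem_filter] at hy
      linarith [hy.2]
  have hcard : (Finset.univ : Finset (Fin n → Bool)).card = 2^n := by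
    simp [Finset.card_univ]
  have hsplit : E.card + (A.card + B.card) = 2^n := by
    have h1 : E.card + (Finset.univ.filter (fun x : Fin n → Bool => ¬ g x = 0)).card
        = 2^n := by
      rw [hE, Finset.card_filter_add_card_filter_not, hcard]
    have h2 : (Finset.univ.filter (fun x : Fin n → Bool => ¬ g x = 0)) = A ∪ B := by
      rw [hA, hB, ← Finset.filter_or]
      apply Finset.filter_congr
      intro x _
      constructor
      · intro h; rcases lt_or_gt_of_ne h with h | h
        · exact Or.inr h
        · exact Or.inl h
      · rintro (h | h) <;> intro h0 <;> rw [h0] at h <;> exact lt_irrefl 0 h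
    have h3 : Disjoint A B := by
      rw [Finset.disjoint_left]
      intro x hx hx'
      simp only [hA, hB, Finset.mem_filter] at hx hx'
      linarith [hx.2, hx'.2]
    rw [h2, Finset.card_union_of_disjoint h3] at h1
    exact h1
  -- ties bound
  obtain ⟨i0, hi0⟩ := hI
  have hEbound : 2 * E.card ≤ 2^n := by
    have hinj : ∀ x ∈ E, (Function.update x i0 (!(x i0))) ∉ E := by
      intro x hx hx'
      simp only [hE, Finset.mem_filter, Finset.mem_univ, true_and] at hx hx'
      have h1 : g (Function.update x i0 (!(x i0))) - g x
          = w i0 * ((if !(x i0) then (-1:ℝ) else 1) - (if x i0 then (-1:ℝ) else 1)) := by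
        rw [hgsum, hgsum, ← Finset.sum_sub_distrib]
        rw [Finset.sum_eq_single i0]
        · rw [Function.update_self]; ring
        · intro i _ hne
          rw [Function.update_of_ne hne]; ring
        · intro h; exact absurd hi0 h
      rw [hx, hx'] at h1
      cases hxi : x i0 <;> rw [hxi] at h1 <;> norm_num at h1 <;>
        exact absurd h1 (hw i0).ne'
    have : E.card ≤ (Finset.univ.filter (fun x : Fin n → Bool => ¬ g x = 0)).card := by
      apply Finset.card_le_card_of_injOn (fun x => Function.update x i0 (!(x i0)))
      · intro x hx
        simp only [Finset.mem_coe, Finset.mem_filter, Finset.mem_univ, true_and]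
        intro h0
        exact hinj x hx (by simp [hE, h0])
      · intro x _ y _ h
        funext i
        by_cases hne : i = i0
        · subst hne
          have := congrFun h i
          simp only [Function.update_self] at this
          cases hxi : x i <;> cases hyi : y i <;> simp [hxi, hyi] at this ⊢
        · have := congrFun h i
          simpa [Function.update_of_ne hne] using this
    have h1 : E.card + (Finset.univ.filter (fun x : Fin n → Bool => ¬ g x = 0)).card
        = 2^n := by
      rw [hE, Finset.card_filter_add_card_filter_not, hcard]
    omega
  -- assemble
  have hgt : Finset.univ.filter (fun x : Fin n → Bool => f (flip x) > f x) = A := by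
    apply Finset.filter_congr; intro x _
    simp only [hg]; exact sub_pos.symm
  have heq : Finset.univ.filter (fun x : Fin n → Bool => f (flip x) = f x) = E := by
    apply Finset.filter_congr; intro x _
    simp only [hg]; exact sub_eq_zero.symm
  rw [hgt] at hPgt
  rw [heq] at hPeq
  have hpow : (0:ℝ) < 2^n := by positivity
  have hsplitR : (E.card : ℝ) + 2 * A.card = 2^n := by
    have h := hsplit
    rw [← hAB] at h
    have h' := congrArg (Nat.cast : ℕ → ℝ) h
    push_cast at h'
    linarith
  have hEboundR : 2 * (E.card : ℝ) ≤ 2^n := by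
    exact_mod_cast hEbound
  have hAcard : (1 : ℝ) - (E.card : ℝ)/2^n = (2*(A.card:ℝ))/2^n := by
    rw [eq_div_iff hpow.ne', sub_mul, one_mul, div_mul_cancel₀ _ hpow.ne']
    linarith
  have h1 : Pgt = (1 - Peq) / 2 := by
    rw [hPgt, hPeq, hAcard]
    ring
  have h2 : Peq ≤ 1/2 := by
    rw [hPeq, div_le_div_iff₀ hpow (by norm_num : (0:ℝ) < 2)]
    linarith
  refine ⟨h1, h2, ?_, ?_⟩
  · rw [h1]; linarith
  · rw [h1]; linarith
end

section
/- Let (p_n)_{n≥1} and (q_n)_{n≥1} be sequences of positive reals with p_n ≤ 1 for all n. Let I ⊆ ℕ be the set of indices n ≥ 2 such that min{ n^{1.01}/ln n , exp(∑_{i=1}^n p_i) / ( p_{⌈n/2⌉} · ∑_{i=1}^n p_i ) } ≤ 1/q_n. Then ∑_{n ∈ I} q_n < ∞. In particular, if ∑ q_n = ∞, then ℕ \ I is infinite. -/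
theorem summable_over_exceptional_indices
    (p q : ℕ → ℝ) (hp : ∀ n, 0 < p n) (hp1 : ∀ n, p n ≤ 1) (hq : ∀ n, 0 < q n)
    (I : Set ℕ)
    (hI : I = {n : ℕ | 2 ≤ n ∧
      min ((n:ℝ) ^ (1.01 : ℝ) / Real.log n)
          (Real.exp (∑ i ∈ Finset.Icc 1 n, p i) /
            (p ((n+1)/2) * ∑ i ∈ Finset.Icc 1 n, p i))
        ≤ 1 / q n}) :
    Summable (Set.indicator I q) ∧ (¬ Summable q → Set.Infinite Iᶜ) := by
  set S : ℕ → ℝ := fun n => ∑ i ∈ Finset.Icc 1 n, p i with hSdef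
  set E : ℕ → ℝ := fun n => Real.exp (-(S n)/2) with hEdef
  have hSmono : ∀ {a b : ℕ}, a ≤ b → S a ≤ S b := by
    intro a b hab
    exact Finset.sum_le_sum_of_subset_of_nonneg
      (Finset.Icc_subset_Icc_right hab) (fun i _ _ => (hp i).le)
  have hSpos : ∀ n, 1 ≤ n → 0 < S n := by
    intro n hn
    exact Finset.sum_pos (fun i _ => hp i) ⟨1, Finset.mem_Icc.2 ⟨le_refl 1, hn⟩⟩
  have hEpos : ∀ n, 0 < E n := fun n => Real.exp_pos _
  have hEanti : ∀ {a b : ℕ}, a ≤ b → E b ≤ E a := by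
    intro a b hab
    exact Real.exp_le_exp.2 (by have := hSmono hab; linarith)
  have hS0 : S 0 = 0 := by simp [hSdef]
  have hE0 : E 0 = 1 := by simp [hEdef, hS0]
  -- key telescoping inequality
  have key : ∀ j : ℕ, p (j+1) * E (j+1) ≤ 2 * (E j - E (j+1)) := by
    intro j
    have hstep : S (j+1) = S j + p (j+1) := by
      simpa using Finset.sum_Icc_succ_top (Nat.one_le_iff_ne_zero.2 (Nat.succ_ne_zero j)) p
    have hEstep : E (j+1) = E j * Real.exp (-(p (j+1))/2) := by
      rw [hEdef]
      simp only
      rw [hstep, ← Real.exp_add]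
      ring_nf
    set x := p (j+1) with hx
    have hxpos : 0 < x := hp _
    have h1 : x/2 + 1 ≤ Real.exp (x/2) := Real.add_one_le_exp _
    have h2 : Real.exp (-x/2) * Real.exp (x/2) = 1 := by
      rw [← Real.exp_add]; ring_nf; exact Real.exp_zero
    have h3 : 0 < Real.exp (-x/2) := Real.exp_pos _
    have h4 : x * Real.exp (-x/2) ≤ 2 * (1 - Real.exp (-x/2)) := by
      nlinarith
    rw [hEstep]
    have hEj := hEpos j
    nlinarith
  -- the auxiliary sequence
  set h : ℕ → ℝ := fun n => p ((n+1)/2) * E n with hhdef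
  have hhnonneg : ∀ n, 0 ≤ h n := fun n => mul_nonneg (hp _).le (hEpos _).le
  -- partial sums bound by induction
  have claim : ∀ N : ℕ, ∑ n ∈ Finset.range (N+1), h n ≤ 5 - 2 * E (N/2) - 2 * E ((N+1)/2) := by
    intro N
    induction N with
    | zero =>
      have h0 : ∑ n ∈ Finset.range (0+1), h n = p 0 := by simp [hhdef, hE0]
      rw [h0, hE0]
      linarith [hp1 0]
    | succ N ih =>
      rw [Finset.sum_range_succ]
      have hk : (N+2)/2 = N/2 + 1 := by omega
      have hk2 : ((N+1)+1)/2 = N/2 + 1 := by omega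
      have hle : N/2 + 1 ≤ N + 1 := by omega
      have hstep : h (N+1) ≤ 2 * (E (N/2) - E (N/2+1)) := by
        have h1 : h (N+1) = p (N/2+1) * E (N+1) := by rw [hhdef]; simp only; rw [hk2]
        have h2 : p (N/2+1) * E (N+1) ≤ p (N/2+1) * E (N/2+1) :=
          mul_le_mul_of_nonneg_left (hEanti hle) (hp _).le
        have h3 := key (N/2)
        linarith
      rw [hk2]
      have hNhalf : (N+1)/2 = N/2 ∨ (N+1)/2 = N/2 + 1 := by omega
      rcases hNhalf with he | he <;> rw [he] at ih ⊢ <;>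
        first
          | linarith [hEanti (Nat.le_succ (N/2))]
          | linarith
  have hhsum : Summable h := by
    apply summable_of_sum_range_le hhnonneg (c := 5)
    intro n
    cases n with
    | zero => simp
    | succ N =>
      have := claim N
      have e1 := hEpos (N/2)
      have e2 := hEpos ((N+1)/2)
      linarith
  -- summability of the log term
  have hLsum : Summable (fun n : ℕ => Real.log n / (n:ℝ) ^ (1.01:ℝ)) := by
    have hmaj : Summable (fun n : ℕ => 200 * (1 / (n:ℝ) ^ (1.005:ℝ))) :=
      (Real.summable_one_div_nat_rpow.2 (by norm_num)).mul_left 200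
    apply Summable.of_nonneg_of_le (fun n => ?_) (fun n => ?_) hmaj
    · exact div_nonneg (Real.log_natCast_nonneg n) (Real.rpow_nonneg (Nat.cast_nonneg n) _)
    · rcases Nat.eq_zero_or_pos n with rfl | hn
      · simp [Real.zero_rpow]
        positivity
      · have hn0 : (0:ℝ) < n := by exact_mod_cast hn
        have hlog : Real.log n ≤ (n:ℝ) ^ (0.005:ℝ) / 0.005 :=
          Real.log_natCast_le_rpow_div n (by norm_num)
        have hexp : (0.005:ℝ) - 1.01 = -(1.005:ℝ) := by norm_num
        have hrpow : (n:ℝ) ^ (0.005:ℝ) / (n:ℝ) ^ (1.01:ℝ) = 1 / (n:ℝ) ^ (1.005:ℝ) := by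
          rw [← Real.rpow_sub hn0, hexp, Real.rpow_neg hn0.le, one_div]
        have hpow_pos : (0:ℝ) < (n:ℝ) ^ (1.01:ℝ) := Real.rpow_pos_of_pos hn0 _
        calc Real.log n / (n:ℝ) ^ (1.01:ℝ)
            ≤ ((n:ℝ) ^ (0.005:ℝ) / 0.005) / (n:ℝ) ^ (1.01:ℝ) := by
              gcongr
          _ = 200 * ((n:ℝ) ^ (0.005:ℝ) / (n:ℝ) ^ (1.01:ℝ)) := by ring
          _ = 200 * (1 / (n:ℝ) ^ (1.005:ℝ)) := by rw [hrpow]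
  -- the dominating function
  set f : ℕ → ℝ := fun n => Real.log n / (n:ℝ) ^ (1.01:ℝ) + 2 * h n with hfdef
  have hfsum : Summable f := hLsum.add (hhsum.mul_left 2)
  have hLnonneg : ∀ n : ℕ, 0 ≤ Real.log n / (n:ℝ) ^ (1.01:ℝ) := fun n =>
    div_nonneg (Real.log_natCast_nonneg n) (Real.rpow_nonneg (Nat.cast_nonneg n) _)
  -- the indicator bound
  have hbound : ∀ n, Set.indicator I q n ≤ f n := by
    intro n
    by_cases hn : n ∈ I
    · rw [Set.indicator_of_mem hn]
      rw [hI] at hn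
      obtain ⟨h2n, hmin⟩ := hn
      have hn0 : (0:ℝ) < n := by exact_mod_cast Nat.lt_of_lt_of_le Nat.zero_lt_two h2n
      have hn1 : (1:ℝ) < n := by exact_mod_cast Nat.lt_of_lt_of_le Nat.one_lt_two h2n
      have hSn : 0 < S n := hSpos n (le_trans one_le_two h2n)
      set m := (n+1)/2 with hm
      have ha : (0:ℝ) < (n:ℝ) ^ (1.01:ℝ) / Real.log n :=
        div_pos (Real.rpow_pos_of_pos hn0 _) (Real.log_pos hn1)
      have hb : (0:ℝ) < Real.exp (S n) / (p m * S n) :=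
        div_pos (Real.exp_pos _) (mul_pos (hp m) hSn)
      have hrepl : (∑ i ∈ Finset.Icc 1 n, p i) = S n := rfl
      rw [hrepl] at hmin
      have hlogpos : 0 < Real.log n := Real.log_pos hn1
      have hpowpos : (0:ℝ) < (n:ℝ) ^ (1.01:ℝ) := Real.rpow_pos_of_pos hn0 _
      rcases min_le_iff.1 hmin with hcase | hcase
      · have h1 : ((n:ℝ) ^ (1.01:ℝ) / Real.log n) * q n ≤ 1 :=
          (le_div_iff₀ (hq n)).1 hcase
        have h2 := mul_le_mul_of_nonneg_right h1 hlogpos.le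
        rw [mul_right_comm, div_mul_cancel₀ _ hlogpos.ne', one_mul] at h2
        have hq' : q n ≤ Real.log n / (n:ℝ) ^ (1.01:ℝ) := by
          rw [le_div_iff₀ hpowpos, mul_comm]
          exact h2
        have := hhnonneg n
        rw [hfdef]
        simp only
        linarith
      · have hD : 0 < p m * S n := mul_pos (hp m) hSn
        have h1 : (Real.exp (S n) / (p m * S n)) * q n ≤ 1 :=
          (le_div_iff₀ (hq n)).1 hcase
        have h2 := mul_le_mul_of_nonneg_right h1 hD.le
        rw [mul_right_comm, div_mul_cancel₀ _ hD.ne', one_mul] at h2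
        have hq' : q n ≤ (p m * S n) / Real.exp (S n) := by
          rw [le_div_iff₀ (Real.exp_pos _), mul_comm]
          exact h2
        have hxe : S n * Real.exp (-(S n)) ≤ 2 * Real.exp (-(S n)/2) := by
          set x := S n with hx
          have h1 : x/2 + 1 ≤ Real.exp (x/2) := Real.add_one_le_exp _
          have h2 : Real.exp (-x) = Real.exp (-x/2) * Real.exp (-x/2) := by
            rw [← Real.exp_add]; ring_nf
          have h3 : Real.exp (-x/2) * Real.exp (x/2) = 1 := by
            rw [← Real.exp_add]; ring_nf; exact Real.exp_zero
          have h4 : 0 < Real.exp (-x/2) := Real.exp_pos _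
          have h5 : 0 < Real.exp (x/2) := Real.exp_pos _
          rw [h2]
          nlinarith
        have hq'' : q n ≤ 2 * h n := by
          have he : (p m * S n) / Real.exp (S n) = p m * (S n * Real.exp (-(S n))) := by
            rw [Real.exp_neg, div_eq_mul_inv]; ring
          rw [he] at hq'
          have : p m * (S n * Real.exp (-(S n))) ≤ p m * (2 * Real.exp (-(S n)/2)) :=
            mul_le_mul_of_nonneg_left hxe (hp m).le
          rw [hhdef]
          simp only [← hm]
          linarith
        rw [hfdef]
        simp only
        linarith [hLnonneg n]
    · rw [Set.indicator_of_notMem hn]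
      rw [hfdef]
      simp only
      have := hhnonneg n
      linarith [hLnonneg n]
  have hindnonneg : ∀ n, 0 ≤ Set.indicator I q n :=
    fun n => Set.indicator_nonneg (fun i _ => (hq i).le) n
  have hsummable : Summable (Set.indicator I q) :=
    Summable.of_nonneg_of_le hindnonneg hbound hfsum
  refine ⟨hsummable, ?_⟩
  intro hnot
  by_contra hfin
  rw [Set.not_infinite] at hfin
  have hcsum : Summable (Set.indicator Iᶜ q) := by
    apply summable_of_ne_finset_zero (s := hfin.toFinset)
    intro n hn
    rw [Set.Finite.mem_toFinset] at hn
    exact Set.indicator_of_notMem hn q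
  have hqsum : Summable q :=
    (hsummable.add hcsum).congr fun b =>
      congrFun (Set.indicator_self_add_compl I q) b
  exact hnot hqsum
end

section
/- Let X_1, ..., X_n be independent random variables and f a function satisfying the bounded differences condition |f(a) - f(a')| ≤ d_i whenever a, a' differ only in coordinate i. Let X = f(X_1, ..., X_n) and S = ∑ d_i². Then P(X > E[X] + t) ≤ exp(-t²/(2S)) and P(X < E[X] - t) ≤ exp(-t²/(2S)). -/
open MeasureTheory ProbabilityTheory

universe u

lemma mcd_hoeff_one {α : Type*} [MeasurableSpace α] (κ : Measure α) [IsProbabilityMeasure κ]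
    (h : α → ℝ) (hm : Measurable h) (D l : ℝ)
    (hD : ∀ a a', |h a - h a'| ≤ D) :
    ∫ a, Real.exp (l * (h a - ∫ x, h x ∂κ)) ∂κ ≤ Real.exp (l ^ 2 * D ^ 2 / 2) := by
  have hne : Nonempty α := by
    by_contra h0
    rw [not_nonempty_iff] at h0
    have h1 : κ Set.univ = 1 := measure_univ
    simp [Set.univ_eq_empty_iff.2 h0] at h1
  obtain ⟨a0⟩ := hne
  have hd0 : 0 ≤ D := le_trans (abs_nonneg _) (hD a0 a0)
  have hb : ∀ a, ‖h a‖ ≤ |h a0| + D := by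
    intro a
    calc ‖h a‖ = |h a - h a0 + h a0| := by rw [Real.norm_eq_abs]; ring_nf
    _ ≤ |h a - h a0| + |h a0| := abs_add_le _ _
    _ ≤ D + |h a0| := by linarith [hD a a0]
    _ = |h a0| + D := by ring
  have hint : Integrable h κ :=
    (integrable_const (|h a0| + D)).mono' hm.aestronglyMeasurable (ae_of_all _ hb)
  set m := ∫ x, h x ∂κ with hm_def
  have hY : ∀ a, |h a - m| ≤ D := by
    intro a
    have heq : h a - m = ∫ x, (h a - h x) ∂κ := by
      rw [integral_sub (integrable_const _) hint, integral_const, probReal_univ]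
      simp [hm_def]
    rw [heq, ← Real.norm_eq_abs]
    have := norm_integral_le_of_norm_le_const (μ := κ) (C := D)
      (f := fun x => h a - h x) (ae_of_all _ fun x => hD a x)
    simpa using this
  rcases eq_or_lt_of_le hd0 with hD0 | hD0
  · -- D = 0 : h is constant
    have hc : ∀ a, h a = m := fun a => by
      have := hY a; rw [← hD0] at this
      have := abs_nonpos_iff.mp this; linarith
    have : ∀ a, Real.exp (l * (h a - m)) = 1 := fun a => by simp [hc a]
    rw [integral_congr_ae (ae_of_all _ this)]
    simp [Real.one_le_exp_iff]
    positivity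
  · -- D > 0
    have key : ∀ a, Real.exp (l * (h a - m)) ≤
        Real.cosh (l * D) + ((h a - m) / D) * Real.sinh (l * D) := by
      intro a
      set y := h a - m with hy
      have hyD : |y| ≤ D := hY a
      have h1 : -D ≤ y := neg_le_of_abs_le hyD
      have h2 : y ≤ D := le_of_abs_le hyD
      set θ : ℝ := (D + y) / (2 * D) with hθ
      have hθ0 : 0 ≤ θ := div_nonneg (by linarith) (by linarith)
      have hθ1 : 0 ≤ 1 - θ := by
        rw [hθ]; rw [sub_nonneg, div_le_one (by positivity)]; linarith
      have hsum : θ + (1 - θ) = 1 := by ring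
      have hcvx := convexOn_exp.2 (Set.mem_univ (l * D)) (Set.mem_univ (-(l * D)))
        hθ0 hθ1 hsum
      have harg : θ • (l * D) + (1 - θ) • (-(l * D)) = l * y := by
        simp only [smul_eq_mul, hθ]
        field_simp
        ring
      rw [harg] at hcvx
      refine hcvx.trans (le_of_eq ?_)
      rw [Real.cosh_eq, Real.sinh_eq, hθ]
      simp only [smul_eq_mul]
      field_simp
      ring
    have hint1 : Integrable (fun a => Real.exp (l * (h a - m))) κ := by
      refine (integrable_const (Real.exp (|l| * D))).mono'
        ((hm.sub measurable_const).const_mul l).exp.aestronglyMeasurable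
        (ae_of_all _ fun a => ?_)
      rw [Real.norm_eq_abs, abs_of_pos (Real.exp_pos _), Real.exp_le_exp]
      calc l * (h a - m) ≤ |l * (h a - m)| := le_abs_self _
      _ = |l| * |h a - m| := abs_mul _ _
      _ ≤ |l| * D := by
          exact mul_le_mul_of_nonneg_left (hY a) (abs_nonneg l)
    have hint2 : Integrable (fun a => Real.cosh (l * D) + ((h a - m) / D) * Real.sinh (l * D)) κ := by
      refine (integrable_const _).add ?_
      exact (((hint.sub (integrable_const m)).div_const D).mul_const _)
    calc ∫ a, Real.exp (l * (h a - m)) ∂κ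
        ≤ ∫ a, (Real.cosh (l * D) + ((h a - m) / D) * Real.sinh (l * D)) ∂κ :=
          integral_mono hint1 hint2 key
      _ = Real.cosh (l * D) := by
          have hint3 : Integrable (fun a => (h a - m) / D * Real.sinh (l * D)) κ := by
            exact ((hint.sub (integrable_const m)).div_const D).mul_const _
          rw [integral_add (integrable_const _) hint3, integral_const, probReal_univ]
          have hz : ∫ a, (h a - m) ∂κ = 0 := by
            rw [integral_sub hint (integrable_const m), integral_const, probReal_univ]
            simp [hm_def]
          rw [integral_mul_const, integral_div, hz]
          simp
      _ ≤ Real.exp ((l * D) ^ 2 / 2) := Real.cosh_le_exp_half_sq _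
      _ = Real.exp (l ^ 2 * D ^ 2 / 2) := by rw [mul_pow]

lemma mcd_telescope : ∀ (n : ℕ) (E : Fin n → Type u) (f : (∀ i, E i) → ℝ)
    (d : Fin n → ℝ)
    (hbd : ∀ (i : Fin n) (a a' : ∀ j, E j), (∀ j, j ≠ i → a j = a' j) → |f a - f a'| ≤ d i)
    (x y : ∀ i, E i), |f x - f y| ≤ ∑ i, d i := by
  intro n
  induction n with
  | zero =>
    intro E f d hbd x y
    have : x = y := funext fun i => i.elim0
    simp [this]
  | succ n ih =>
    intro E f d hbd x y
    set z : ∀ i, E i := Fin.cons (y 0) (Fin.tail x) with hz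
    have h1 : |f x - f z| ≤ d 0 := by
      refine hbd 0 x z fun j hj => ?_
      rcases Fin.eq_succ_of_ne_zero hj with ⟨k, rfl⟩
      simp [hz, Fin.tail]
    set F : (∀ j : Fin n, E j.succ) → ℝ := fun b => f (Fin.cons (y 0) b) with hF
    have hbd' : ∀ (j : Fin n) (b b' : ∀ k : Fin n, E k.succ),
        (∀ k, k ≠ j → b k = b' k) → |F b - F b'| ≤ d j.succ := by
      intro j b b' hbb
      refine hbd j.succ _ _ fun k hk => ?_
      rcases Fin.eq_zero_or_eq_succ k with rfl | ⟨k', rfl⟩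
      · simp
      · simp only [Fin.cons_succ]
        exact hbb k' (fun hc => hk (by rw [hc]))
    have h2 : |f z - f y| ≤ ∑ j : Fin n, d j.succ := by
      have hzF : f z = F (Fin.tail x) := rfl
      have hyF : f y = F (Fin.tail y) := by
        rw [hF]; simp only []
        rw [show (Fin.cons (y 0) (Fin.tail y) : ∀ i, E i) = y from Fin.cons_self_tail y]
      rw [hzF, hyF]
      exact ih (fun j => E j.succ) F (fun j => d j.succ) hbd' (Fin.tail x) (Fin.tail y)
    calc |f x - f y| ≤ |f x - f z| + |f z - f y| := abs_sub_le _ _ _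
    _ ≤ d 0 + ∑ j : Fin n, d j.succ := add_le_add h1 h2
    _ = ∑ i, d i := (Fin.sum_univ_succ d).symm

lemma mcd_mgf : ∀ (n : ℕ) (E : Fin n → Type u) [inst : ∀ i, MeasurableSpace (E i)]
    (ν : ∀ i, Measure (E i)) [∀ i, IsProbabilityMeasure (ν i)]
    (f : (∀ i, E i) → ℝ) (hf : Measurable f) (d : Fin n → ℝ)
    (hbd : ∀ (i : Fin n) (a a' : ∀ j, E j), (∀ j, j ≠ i → a j = a' j) → |f a - f a'| ≤ d i)
    (l : ℝ),
    ∫ x, Real.exp (l * (f x - ∫ x', f x' ∂(Measure.pi ν))) ∂(Measure.pi ν)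
      ≤ Real.exp (l ^ 2 * (∑ i, d i ^ 2) / 2) := by
  intro n
  induction n with
  | zero =>
    intro E inst ν hν f hf d hbd l
    have hc : ∀ x : (∀ i, E i), f x = f (fun i => i.elim0) := fun x =>
      congrArg f (Subsingleton.elim _ _)
    simp_rw [hc]
    rw [integral_const, probReal_univ]
    simp
  | succ n ih =>
    intro E inst ν hν f hf d hbd l
    -- nonemptiness and boundedness
    have hEne : ∀ i, Nonempty (E i) := by
      intro i
      by_contra h0
      rw [not_nonempty_iff] at h0
      have h1 : ν i Set.univ = 1 := measure_univ
      simp [Set.univ_eq_empty_iff.2 h0] at h1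
    have x₀ : ∀ i, E i := fun i => Classical.arbitrary _
    set C : ℝ := |f x₀| + ∑ i, d i with hC
    have hfb : ∀ x, |f x| ≤ C := by
      intro x
      have := mcd_telescope (n + 1) E f d hbd x x₀
      calc |f x| = |f x - f x₀ + f x₀| := by ring_nf
      _ ≤ |f x - f x₀| + |f x₀| := abs_add_le _ _
      _ ≤ (∑ i, d i) + |f x₀| := by linarith
      _ = C := by rw [hC]; ring
    -- setup
    set i0 : Fin (n + 1) := 0 with hi0
    set T := MeasurableEquiv.piFinSuccAbove E i0 with hT
    set κ := ν i0 with hκ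
    set ν' : ∀ j : Fin n, Measure (E (i0.succAbove j)) := fun j => ν (i0.succAbove j) with hν'
    set Pm := Measure.pi ν with hPm
    set Pm' := Measure.pi ν' with hPm'
    have hMP : MeasurePreserving T Pm (κ.prod Pm') := measurePreserving_piFinSuccAbove ν i0
    have hMPs : MeasurePreserving T.symm (κ.prod Pm') Pm := hMP.symm T
    have hTs : ∀ (a : E i0) (b : ∀ j, E (i0.succAbove j)),
        T.symm (a, b) = Fin.insertNth i0 a b := fun a b => rfl
    set m := ∫ x', f x' ∂Pm with hm
    have hmb : |m| ≤ C := by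
      rw [hm, ← Real.norm_eq_abs]
      have := norm_integral_le_of_norm_le_const (μ := Pm) (C := C) (f := f)
        (ae_of_all _ fun x => hfb x)
      simpa using this
    -- the partially integrated function
    set G : (∀ j, E (i0.succAbove j)) → ℝ :=
      fun b => ∫ a, f (Fin.insertNth i0 a b) ∂κ with hG
    have hfT : Measurable (fun p : E i0 × (∀ j, E (i0.succAbove j)) => f (T.symm p)) :=
      hf.comp T.symm.measurable
    have hGm : Measurable G := by
      have : StronglyMeasurable (fun b => ∫ a, f (T.symm (a, b)) ∂κ) :=
        hfT.stronglyMeasurable.integral_prod_left'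
      exact this.measurable
    have hGb : ∀ b, |G b| ≤ C := by
      intro b
      rw [hG, ← Real.norm_eq_abs]
      have := norm_integral_le_of_norm_le_const (μ := κ) (C := C)
        (f := fun a => f (Fin.insertNth i0 a b)) (ae_of_all _ fun a => hfb _)
      simpa using this
    have hins : ∀ (c : ∀ j, E (i0.succAbove j)), Measurable (fun a => f (Fin.insertNth i0 a c)) :=
      fun c => hfT.comp (measurable_id.prodMk measurable_const)
    have hIa : ∀ (c : ∀ j, E (i0.succAbove j)), Integrable (fun a => f (Fin.insertNth i0 a c)) κ :=
      fun c => (integrable_const C).mono' (hins c).aestronglyMeasurable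
        (ae_of_all _ fun a => hfb _)
    -- bounded differences of the slices and of G
    have hslice : ∀ (b : ∀ j, E (i0.succAbove j)) (a a' : E i0),
        |f (Fin.insertNth i0 a b) - f (Fin.insertNth i0 a' b)| ≤ d i0 := by
      intro b a a'
      refine hbd i0 _ _ fun k hk => ?_
      obtain ⟨k', rfl⟩ := Fin.exists_succAbove_eq hk
      simp
    have hGbd : ∀ (j : Fin n) (b b' : ∀ k, E (i0.succAbove k)),
        (∀ k, k ≠ j → b k = b' k) → |G b - G b'| ≤ d (i0.succAbove j) := by
      intro j b b' hbb
      have hpt : ∀ a, |f (Fin.insertNth i0 a b) - f (Fin.insertNth i0 a b')|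
          ≤ d (i0.succAbove j) := by
        intro a
        refine hbd (i0.succAbove j) _ _ fun k hk => ?_
        by_cases hk0 : k = i0
        · subst hk0; simp
        · obtain ⟨k', rfl⟩ := Fin.exists_succAbove_eq hk0
          simp only [Fin.insertNth_apply_succAbove]
          exact hbb k' fun hc => hk (by rw [hc])
      have heq : G b - G b' = ∫ a, (f (Fin.insertNth i0 a b) - f (Fin.insertNth i0 a b')) ∂κ := by
        rw [integral_sub (hIa b) (hIa b')]
      rw [heq, ← Real.norm_eq_abs]
      have := norm_integral_le_of_norm_le_const (μ := κ) (C := d (i0.succAbove j))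
        (f := fun a => f (Fin.insertNth i0 a b) - f (Fin.insertNth i0 a b'))
        (ae_of_all _ fun a => hpt a)
      simpa using this
    -- Fubini : ∫ G = m
    have hIprod : Integrable (fun p => f (T.symm p)) (κ.prod Pm') :=
      (integrable_const C).mono' hfT.aestronglyMeasurable (ae_of_all _ fun p => hfb _)
    have hGint : ∫ b, G b ∂Pm' = m := by
      rw [hm, ← hMPs.integral_comp' f, integral_prod_symm _ hIprod]
      rfl
    -- integrability of the exponential integrand on the product
    have h2C : ∀ p : E i0 × (∀ j, E (i0.succAbove j)), |f (T.symm p) - m| ≤ C + C := fun p =>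
      (abs_sub _ _).trans (add_le_add (hfb _) hmb)
    have hIexp : Integrable (fun p => Real.exp (l * (f (T.symm p) - m))) (κ.prod Pm') := by
      refine (integrable_const (Real.exp (|l| * (C + C)))).mono'
        ((hfT.sub measurable_const).const_mul l).exp.aestronglyMeasurable
        (ae_of_all _ fun p => ?_)
      rw [Real.norm_eq_abs, abs_of_pos (Real.exp_pos _), Real.exp_le_exp]
      calc l * (f (T.symm p) - m) ≤ |l * (f (T.symm p) - m)| := le_abs_self _
      _ = |l| * |f (T.symm p) - m| := abs_mul _ _
      _ ≤ |l| * (C + C) := mul_le_mul_of_nonneg_left (h2C p) (abs_nonneg l)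
    -- integrability of exp (l * (G b - m))
    have hGexp_int : Integrable (fun b => Real.exp (l * (G b - m))) Pm' := by
      refine (integrable_const (Real.exp (|l| * (C + C)))).mono'
        ((hGm.sub measurable_const).const_mul l).exp.aestronglyMeasurable
        (ae_of_all _ fun b => ?_)
      rw [Real.norm_eq_abs, abs_of_pos (Real.exp_pos _), Real.exp_le_exp]
      calc l * (G b - m) ≤ |l * (G b - m)| := le_abs_self _
      _ = |l| * |G b - m| := abs_mul _ _
      _ ≤ |l| * (C + C) := mul_le_mul_of_nonneg_left
          ((abs_sub _ _).trans (add_le_add (hGb b) hmb)) (abs_nonneg l)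
    -- pointwise rewriting of the inner integral
    have hinner : ∀ b, (∫ a, Real.exp (l * (f (Fin.insertNth i0 a b) - m)) ∂κ)
        = Real.exp (l * (G b - m)) * ∫ a, Real.exp (l * (f (Fin.insertNth i0 a b) - G b)) ∂κ := by
      intro b
      rw [← integral_const_mul]
      refine integral_congr_ae (ae_of_all _ fun a => ?_)
      show Real.exp (l * (f (Fin.insertNth i0 a b) - m))
        = Real.exp (l * (G b - m)) * Real.exp (l * (f (Fin.insertNth i0 a b) - G b))
      rw [← Real.exp_add]
      congr 1
      ring
    -- inner Hoeffding bound
    have hinner_le : ∀ b, (∫ a, Real.exp (l * (f (Fin.insertNth i0 a b) - G b)) ∂κ)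
        ≤ Real.exp (l ^ 2 * d i0 ^ 2 / 2) := by
      intro b
      have := mcd_hoeff_one κ (fun a => f (Fin.insertNth i0 a b)) (hins b) (d i0) l
        (fun a a' => hslice b a a')
      exact this
    calc ∫ x, Real.exp (l * (f x - m)) ∂Pm
        = ∫ p, Real.exp (l * (f (T.symm p) - m)) ∂(κ.prod Pm') := by
          rw [hMPs.integral_comp' (fun x => Real.exp (l * (f x - m)))]
      _ = ∫ b, ∫ a, Real.exp (l * (f (Fin.insertNth i0 a b) - m)) ∂κ ∂Pm' :=
          integral_prod_symm _ hIexp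
      _ ≤ ∫ b, Real.exp (l * (G b - m)) * Real.exp (l ^ 2 * d i0 ^ 2 / 2) ∂Pm' := by
          refine integral_mono hIexp.integral_prod_right
            (hGexp_int.mul_const _) fun b => ?_
          rw [hinner b]
          exact mul_le_mul_of_nonneg_left (hinner_le b) (Real.exp_pos _).le
      _ = (∫ b, Real.exp (l * (G b - m)) ∂Pm') * Real.exp (l ^ 2 * d i0 ^ 2 / 2) :=
          integral_mul_const _ _
      _ ≤ Real.exp (l ^ 2 * (∑ j, d (i0.succAbove j) ^ 2) / 2)
            * Real.exp (l ^ 2 * d i0 ^ 2 / 2) := by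
          refine mul_le_mul_of_nonneg_right ?_ (Real.exp_pos _).le
          have hIH := ih (fun j => E (i0.succAbove j)) ν' G hGm
            (fun j => d (i0.succAbove j)) hGbd l
          rwa [hGint] at hIH
      _ = Real.exp (l ^ 2 * (∑ i, d i ^ 2) / 2) := by
          rw [← Real.exp_add, Fin.sum_univ_succAbove (fun i => d i ^ 2) i0]
          congr 1
          ring

lemma mcd_tail (n : ℕ) (E : Fin n → Type u) [inst : ∀ i, MeasurableSpace (E i)]
    (ν : ∀ i, Measure (E i)) [hν : ∀ i, IsProbabilityMeasure (ν i)]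
    (f : (∀ i, E i) → ℝ) (hf : Measurable f) (d : Fin n → ℝ)
    (hbd : ∀ (i : Fin n) (a a' : ∀ j, E j), (∀ j, j ≠ i → a j = a' j) → |f a - f a'| ≤ d i)
    (S : ℝ) (hS : S = ∑ i, (d i) ^ 2) (t : ℝ) (ht : 0 < t) :
    ((Measure.pi ν) {x | (∫ x', f x' ∂(Measure.pi ν)) + t < f x}).toReal
      ≤ Real.exp (-t ^ 2 / (2 * S)) := by
  set Pm := Measure.pi ν with hPm
  set m := ∫ x', f x' ∂Pm with hm
  have hd0 : ∀ i, 0 ≤ d i := by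
    intro i
    have hne : Nonempty (∀ i, E i) := by
      by_contra h0
      rw [not_nonempty_iff] at h0
      have h1 : Pm Set.univ = 1 := measure_univ
      simp [Set.univ_eq_empty_iff.2 h0] at h1
    obtain ⟨x⟩ := hne
    exact le_trans (abs_nonneg _) (hbd i x x fun _ _ => rfl)
  have hS0 : 0 ≤ S := hS ▸ Finset.sum_nonneg fun i _ => sq_nonneg _
  rcases eq_or_lt_of_le hS0 with hSz | hSpos
  · -- S = 0 : f is constant, the set is empty
    have hdz : ∀ i, d i = 0 := by
      intro i
      have h1 : ∑ i, (d i) ^ 2 = 0 := by rw [← hS, ← hSz]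
      have h2 := (Finset.sum_eq_zero_iff_of_nonneg (fun i _ => sq_nonneg (d i))).mp h1
        i (Finset.mem_univ i)
      exact pow_eq_zero_iff (two_ne_zero) |>.mp h2
    have hconst : ∀ x y, f x = f y := by
      intro x y
      have := mcd_telescope n E f d hbd x y
      rw [Finset.sum_congr rfl fun i _ => hdz i] at this
      simp at this
      linarith [abs_nonneg (f x - f y), this]
    have hne : Nonempty (∀ i, E i) := by
      by_contra h0
      rw [not_nonempty_iff] at h0
      have h1 : Pm Set.univ = 1 := measure_univ
      simp [Set.univ_eq_empty_iff.2 h0] at h1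
    obtain ⟨x₀⟩ := hne
    have hmx : m = f x₀ := by
      rw [hm]
      rw [integral_congr_ae (ae_of_all _ fun x => hconst x x₀), integral_const, probReal_univ]
      simp
    have hempty : {x | m + t < f x} = ∅ := by
      ext x
      simp only [Set.mem_setOf_eq, Set.mem_empty_iff_false, iff_false, not_lt]
      rw [hmx, hconst x x₀]
      linarith
    rw [hempty]
    simp [Real.exp_nonneg]
  · -- S > 0 : Chernoff with l = t / S
    set l : ℝ := t / S with hl
    have hlpos : 0 < l := div_pos ht hSpos
    -- boundedness, integrability of exp (l * f)
    have hne : Nonempty (∀ i, E i) := by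
      by_contra h0
      rw [not_nonempty_iff] at h0
      have h1 : Pm Set.univ = 1 := measure_univ
      simp [Set.univ_eq_empty_iff.2 h0] at h1
    obtain ⟨x₀⟩ := hne
    set C : ℝ := |f x₀| + ∑ i, d i with hC
    have hfb : ∀ x, |f x| ≤ C := by
      intro x
      have := mcd_telescope n E f d hbd x x₀
      calc |f x| = |f x - f x₀ + f x₀| := by ring_nf
      _ ≤ |f x - f x₀| + |f x₀| := abs_add_le _ _
      _ ≤ (∑ i, d i) + |f x₀| := by linarith
      _ = C := by rw [hC]; ring
    have hint : Integrable (fun x => Real.exp (l * f x)) Pm := by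
      refine (integrable_const (Real.exp (|l| * C))).mono'
        (hf.const_mul l).exp.aestronglyMeasurable (ae_of_all _ fun x => ?_)
      rw [Real.norm_eq_abs, abs_of_pos (Real.exp_pos _), Real.exp_le_exp]
      calc l * f x ≤ |l * f x| := le_abs_self _
      _ = |l| * |f x| := abs_mul _ _
      _ ≤ |l| * C := mul_le_mul_of_nonneg_left (hfb x) (abs_nonneg l)
    have hmgf : mgf f Pm l ≤ Real.exp (l * m) * Real.exp (l ^ 2 * S / 2) := by
      have h1 := mcd_mgf n E ν f hf d hbd l
      rw [← hS, ← hPm, ← hm] at h1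
      have h2 : mgf f Pm l = Real.exp (l * m) * ∫ x, Real.exp (l * (f x - m)) ∂Pm := by
        rw [mgf, ← integral_const_mul]
        refine integral_congr_ae (ae_of_all _ fun x => ?_)
        show Real.exp (l * f x) = Real.exp (l * m) * Real.exp (l * (f x - m))
        rw [← Real.exp_add]
        congr 1
        ring
      rw [h2]
      exact mul_le_mul_of_nonneg_left h1 (Real.exp_pos _).le
    have hchern := measure_ge_le_exp_mul_mgf (μ := Pm) (X := f) (m + t) hlpos.le hint
    have hsub : (Pm {x | m + t < f x}).toReal ≤ (Pm {x | m + t ≤ f x}).toReal := by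
      refine ENNReal.toReal_mono (measure_ne_top _ _) (measure_mono fun x hx => le_of_lt (Set.mem_setOf_eq ▸ hx))
    calc (Pm {x | m + t < f x}).toReal
        ≤ (Pm {x | m + t ≤ f x}).toReal := hsub
      _ ≤ Real.exp (-l * (m + t)) * mgf f Pm l := hchern
      _ ≤ Real.exp (-l * (m + t)) * (Real.exp (l * m) * Real.exp (l ^ 2 * S / 2)) :=
          mul_le_mul_of_nonneg_left hmgf (Real.exp_pos _).le
      _ = Real.exp (-t ^ 2 / (2 * S)) := by
          rw [← Real.exp_add, ← Real.exp_add]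
          congr 1
          rw [hl]
          field_simp
          ring

theorem mcdiarmid_bounded_differences
    {Ω : Type*} [MeasurableSpace Ω] (μ : Measure Ω) [IsProbabilityMeasure μ]
    (n : ℕ) (E : Fin n → Type*) [∀ i, MeasurableSpace (E i)]
    (X : ∀ i, Ω → E i)
    (hind : iIndepFun X μ)
    (hmeas : ∀ i, Measurable (X i))
    (f : (∀ i, E i) → ℝ) (hf : Measurable f)
    (d : Fin n → ℝ)
    (hbd : ∀ (i : Fin n) (a a' : ∀ j, E j),
      (∀ j, j ≠ i → a j = a' j) → |f a - f a'| ≤ d i)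
    (S : ℝ) (hS : S = ∑ i, (d i)^2) (t : ℝ) (ht : 0 < t) :
    (μ {ω | (∫ ω', f (fun i => X i ω') ∂μ) + t < f (fun i => X i ω)}).toReal
      ≤ Real.exp (-t^2 / (2*S)) ∧
    (μ {ω | f (fun i => X i ω) < (∫ ω', f (fun i => X i ω') ∂μ) - t}).toReal
      ≤ Real.exp (-t^2 / (2*S)) := by
  classical
  set J : Ω → ∀ i, E i := fun ω i => X i ω with hJ
  have hJm : Measurable J := measurable_pi_iff.2 hmeas
  set ν : ∀ i, Measure (E i) := fun i => μ.map (X i) with hν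
  haveI : ∀ i, IsProbabilityMeasure (ν i) := fun i =>
    Measure.isProbabilityMeasure_map (hmeas i).aemeasurable
  -- the law of the joint variable is the product measure
  have hmap : μ.map J = Measure.pi ν := by
    refine (Measure.pi_eq fun s hs => ?_).symm
    rw [Measure.map_apply hJm (MeasurableSet.univ_pi hs)]
    have hpre : J ⁻¹' Set.pi Set.univ s = ⋂ i ∈ Finset.univ, X i ⁻¹' s i := by
      ext ω
      simp [Set.mem_pi, hJ]
    rw [hpre, hind.measure_inter_preimage_eq_mul Finset.univ fun i _ => hs i]
    exact Finset.prod_congr rfl fun i _ =>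
      (Measure.map_apply (hmeas i) (hs i)).symm
  -- transfer the mean
  have hmean : ∫ ω', f (fun i => X i ω') ∂μ = ∫ x, f x ∂(Measure.pi ν) := by
    rw [← hmap, integral_map hJm.aemeasurable hf.aestronglyMeasurable]
  set m : ℝ := ∫ ω', f (fun i => X i ω') ∂μ with hm
  -- transfer the measures of the two events
  constructor
  · -- upper tail
    have h1 := mcd_tail n E ν f hf d hbd S (by rw [hS]) t ht
    rw [← hmean] at h1
    have hset_meas : MeasurableSet {x | m + t < f x} :=
      measurableSet_lt measurable_const hf
    have h3 : μ {ω | m + t < f (fun i => X i ω)}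
        = (Measure.pi ν) {x | m + t < f x} := by
      rw [← hmap, Measure.map_apply hJm hset_meas]
      rfl
    rw [h3]
    exact h1
  · -- lower tail : apply to -f
    have hbd' : ∀ (i : Fin n) (a a' : ∀ j, E j),
        (∀ j, j ≠ i → a j = a' j) → |(-f) a - (-f) a'| ≤ d i := by
      intro i a a' h
      have h0 := hbd i a a' h
      rw [abs_sub_comm] at h0
      calc |(-f) a - (-f) a'| = |f a' - f a| := by
            simp only [Pi.neg_apply]
            ring_nf
      _ ≤ d i := h0
    have h1 := mcd_tail n E ν (-f) hf.neg d hbd' S (by rw [hS]) t ht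
    have hmean' : ∫ x, (-f) x ∂(Measure.pi ν) = -m := by
      have : ∀ x, (-f) x = -(f x) := fun x => rfl
      simp_rw [this]
      rw [integral_neg, ← hmean]
    rw [hmean'] at h1
    have hseteq : {x | -m + t < (-f) x} = {x | f x < m - t} := by
      ext x
      simp only [Set.mem_setOf_eq, Pi.neg_apply]
      constructor <;> intro hx <;> linarith
    rw [hseteq] at h1
    have hset_meas : MeasurableSet {x | f x < m - t} :=
      measurableSet_lt hf measurable_const
    have h3 : μ {ω | f (fun i => X i ω) < m - t}
        = (Measure.pi ν) {x | f x < m - t} := by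
      rw [← hmap, Measure.map_apply hJm hset_meas]
      rfl
    rw [h3]
    exact h1
end
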